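/- arXiv:2209.09437 — 9 statements merged into one kernel-verified Lean document; each statement's English description precedes it below -/
import Mathlib

section
/- Let W be the real symmetric (m+n)×(m+n) saddle point matrix W = [[A, B], [Bᵀ, C]], where A ∈ ℝ^{m×m} is symmetric positive definite, B ∈ ℝ^{m×n}, and C ∈ ℝ^{n×n} is symmetric negative semidefinite. Then λ_max(W) + λ_min(W) ≥ λ_min(A) + λ_min(C), where λ_max(·) and λ_min(·) denote the maximum and minimum eigenvalues. -/
open Matrix

/-- A real matrix is negative semidefinite if it is symmetric (Hermitian) and its
quadratic form is nonpositive. -/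
def Matrix.NegSemidefinite {k : Type*} [Fintype k] (M : Matrix k k ℝ) : Prop :=
  M.IsHermitian ∧ ∀ x : k → ℝ, x ⬝ᵥ (M *ᵥ x) ≤ 0

/-- The maximum eigenvalue of a real symmetric matrix. -/
noncomputable def maxEig {k : Type*} [Fintype k] [DecidableEq k]
    {M : Matrix k k ℝ} (hM : M.IsHermitian) : ℝ :=
  ⨆ i, hM.eigenvalues i

/-- The minimum eigenvalue of a real symmetric matrix. -/
noncomputable def minEig {k : Type*} [Fintype k] [DecidableEq k]
    {M : Matrix k k ℝ} (hM : M.IsHermitian) : ℝ :=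
  ⨅ i, hM.eigenvalues i

/-- The spectral radius of a real symmetric matrix: the maximum of the absolute
values of its eigenvalues. -/
noncomputable def specRad {k : Type*} [Fintype k] [DecidableEq k]
    {M : Matrix k k ℝ} (hM : M.IsHermitian) : ℝ :=
  ⨆ i, |hM.eigenvalues i|

open scoped RealInnerProductSpace

lemma rayleigh_decomp {k : Type*} [Fintype k] [DecidableEq k] {M : Matrix k k ℝ}
    (hM : M.IsHermitian) (x : k → ℝ) :
    x ⬝ᵥ (M *ᵥ x) = ∑ i, hM.eigenvalues i * ((WithLp.equiv 2 (∀ _ : k, ℝ)) (hM.eigenvectorBasis i) ⬝ᵥ x) ^ 2 ∧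
    x ⬝ᵥ x = ∑ i, ((WithLp.equiv 2 (∀ _ : k, ℝ)) (hM.eigenvectorBasis i) ⬝ᵥ x) ^ 2 := by
  set b := hM.eigenvectorBasis with hb
  set v : k → (k → ℝ) := fun i => (WithLp.equiv 2 (∀ _ : k, ℝ)) (b i) with hv
  set e := (WithLp.equiv 2 (∀ _ : k, ℝ)).symm with he
  have hMT : Mᵀ = M := by
    ext i j
    have := congrFun (congrFun hM i) j
    simpa [conjTranspose_apply] using this
  have hdot : ∀ (z : EuclideanSpace ℝ k) (u : k → ℝ),
      (⟪z, e u⟫) = (WithLp.equiv 2 (∀ _ : k, ℝ)) z ⬝ᵥ u := by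
    intro z u; simp [PiLp.inner_apply, dotProduct, he]
    exact Finset.sum_congr rfl fun _ _ => mul_comm _ _
  have hbM : ∀ i, (⟪b i, e (M *ᵥ x)⟫) = hM.eigenvalues i * (v i ⬝ᵥ x) := by
    intro i
    rw [hdot]
    calc v i ⬝ᵥ (M *ᵥ x) = (Mᵀ *ᵥ v i) ⬝ᵥ x := by
          rw [dotProduct_mulVec, mulVec_transpose]
      _ = (M *ᵥ v i) ⬝ᵥ x := by rw [hMT]
      _ = hM.eigenvalues i * (v i ⬝ᵥ x) := by
          rw [hv]; change (M *ᵥ (hM.eigenvectorBasis i).ofLp) ⬝ᵥ x = hM.eigenvalues i * ((hM.eigenvectorBasis i).ofLp ⬝ᵥ x); rw [hM.mulVec_eigenvectorBasis, smul_dotProduct, smul_eq_mul]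
  have hsym : ∀ i, (⟪e x, b i⟫) = v i ⬝ᵥ x := by
    intro i; rw [real_inner_comm, hdot]
  constructor
  · have := b.sum_inner_mul_inner (e x) (e (M *ᵥ x))
    rw [hdot] at this
    simp only [he, Equiv.apply_symm_apply] at this
    rw [← this]
    refine Finset.sum_congr rfl fun i _ => ?_
    rw [hbM i, hsym i, sq]; ring
  · have := b.sum_inner_mul_inner (e x) (e x)
    rw [hdot] at this
    simp only [he, Equiv.apply_symm_apply] at this
    rw [← this]
    refine Finset.sum_congr rfl fun i _ => ?_
    rw [hdot, hsym i, sq]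

lemma minEig_mul_le {k : Type*} [Fintype k] [DecidableEq k] [Nonempty k] {M : Matrix k k ℝ}
    (hM : M.IsHermitian) (x : k → ℝ) : minEig hM * (x ⬝ᵥ x) ≤ x ⬝ᵥ (M *ᵥ x) := by
  obtain ⟨h1, h2⟩ := rayleigh_decomp hM x
  rw [h1, h2, Finset.mul_sum]
  refine Finset.sum_le_sum fun i _ => ?_
  exact mul_le_mul_of_nonneg_right
    (ciInf_le (Set.Finite.bddBelow (Set.finite_range _)) i) (sq_nonneg _)

lemma le_maxEig_mul {k : Type*} [Fintype k] [DecidableEq k] [Nonempty k] {M : Matrix k k ℝ}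
    (hM : M.IsHermitian) (x : k → ℝ) : x ⬝ᵥ (M *ᵥ x) ≤ maxEig hM * (x ⬝ᵥ x) := by
  obtain ⟨h1, h2⟩ := rayleigh_decomp hM x
  rw [h1, h2, Finset.mul_sum]
  refine Finset.sum_le_sum fun i _ => ?_
  exact mul_le_mul_of_nonneg_right
    (le_ciSup (Set.Finite.bddAbove (Set.finite_range _)) i) (sq_nonneg _)

lemma exists_min_eigvec {k : Type*} [Fintype k] [DecidableEq k] [Nonempty k] {M : Matrix k k ℝ}
    (hM : M.IsHermitian) : ∃ v : k → ℝ, v ⬝ᵥ v = 1 ∧ M *ᵥ v = minEig hM • v := by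
  obtain ⟨i, hi⟩ := exists_eq_ciInf_of_finite (f := hM.eigenvalues)
  refine ⟨(WithLp.equiv 2 (∀ _ : k, ℝ)) (hM.eigenvectorBasis i), ?_, ?_⟩
  · have h := hM.eigenvectorBasis.orthonormal.1 i
    have h2 : (⟪hM.eigenvectorBasis i, hM.eigenvectorBasis i⟫ : ℝ) = 1 := by
      rw [real_inner_self_eq_norm_sq, h]; norm_num
    rw [← h2]
    simp [PiLp.inner_apply, dotProduct]
    rw [PiLp.inner_apply] at h2; simpa [sq] using h2
  · change M *ᵥ (hM.eigenvectorBasis i).ofLp = minEig hM • (hM.eigenvectorBasis i).ofLp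
    rw [hM.mulVec_eigenvectorBasis, minEig, ← hi]
lemma saddle_alg (s r a0 c0 β lam mu lA lC : ℝ) (hz1 : s + r = 1)
    (e1 : a0 + β = lam * s) (e2 : β + c0 = lam * r)
    (hA0 : lA * s ≤ a0) (hC0 : lC * r ≤ c0) (hs : 0 < s) (hr : 0 < r)
    (hbd : r^2 * a0 - 2*s*r*β + s^2*c0 ≤ mu * (r^2*s + s^2*r)) :
    lA + lC ≤ mu + lam := by
  have hT1 : (lA - lam) * s ≤ a0 - lam * s := by linarith [hA0]
  have hT2 : (lC - lam) * r ≤ a0 - lam * s := by linarith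
  have h3 : r*(a0 - lam*s) + s*(a0 - lam*s) = a0 - lam*s := by
    linear_combination (a0 - lam*s) * hz1
  have hT : s*r*(lA + lC - 2*lam) ≤ a0 - lam*s := by
    have k1 := mul_le_mul_of_nonneg_left hT1 hr.le
    have k2 := mul_le_mul_of_nonneg_left hT2 hs.le
    nlinarith [k1, k2, h3]
  have hid : r^2 * a0 - 2*s*r*β + s^2*c0
      = (a0 - lam*s) * (r+s)^2 + lam*(s*r)*(s+r) := by
    have hβ' : β = lam*s - a0 := by linarith
    have hc0' : c0 = lam*r - lam*s + a0 := by linarith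
    rw [hβ', hc0']; ring
  have hrs2 : r^2*s + s^2*r = s*r := by linear_combination (s*r) * hz1
  have h1 : (r+s)^2 = 1 := by linear_combination (s+r+1) * hz1
  have h4 : lam*(s*r)*(s+r) = lam*(s*r) := by linear_combination (lam*(s*r)) * hz1
  have hfin : s*r*(lA + lC - lam) ≤ mu * (s*r) := by
    rw [hid, hrs2, h1, mul_one, h4] at hbd
    linarith [hbd, hT]
  nlinarith [hfin, mul_pos hs hr]

theorem stmt_5 (m n : ℕ) (hm : 0 < m) (hn : 0 < n)
    (A : Matrix (Fin m) (Fin m) ℝ) (B : Matrix (Fin m) (Fin n) ℝ)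
    (C : Matrix (Fin n) (Fin n) ℝ)
    (hA : A.PosDef) (hC : C.NegSemidefinite)
    (hW : (fromBlocks A B Bᵀ C).IsHermitian) :
    minEig hA.isHermitian + minEig hC.1 ≤ maxEig hW + minEig hW := by
  haveI : Nonempty (Fin m) := Fin.pos_iff_nonempty.mp hm
  haveI : Nonempty (Fin n) := Fin.pos_iff_nonempty.mp hn
  -- lA > 0
  have hlA_pos : 0 < minEig hA.isHermitian := by
    obtain ⟨i, hi⟩ := exists_eq_ciInf_of_finite (f := hA.isHermitian.eigenvalues)
    rw [minEig, ← hi]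
    exact hA.eigenvalues_pos i
  -- lC ≤ 0
  have hlC_nonpos : minEig hC.1 ≤ 0 := by
    obtain ⟨v, hv1, hv2⟩ := exists_min_eigvec hC.1
    have := hC.2 v
    rw [hv2, dotProduct_smul, smul_eq_mul, hv1, mul_one] at this
    exact this
  -- mu ≥ lA
  have hmu_ge : minEig hA.isHermitian ≤ maxEig hW := by
    obtain ⟨v, hv1, hv2⟩ := exists_min_eigvec hA.isHermitian
    have h := le_maxEig_mul hW (Sum.elim v 0)
    rw [fromBlocks_mulVec, sumElim_dotProduct_sumElim] at h
    simp only [Sum.elim_comp_inl, Sum.elim_comp_inr, mulVec_zero, add_zero, dotProduct_zero, hv2, dotProduct_smul,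
      smul_eq_mul, hv1, mul_one, zero_dotProduct, sumElim_dotProduct_sumElim] at h
    linarith
  rcases le_or_gt (minEig hC.1) (minEig hW) with hcase | hcase
  · linarith
  -- main case : lam < lC
  obtain ⟨z, hz1, hz2⟩ := exists_min_eigvec hW
  obtain ⟨x, y, rfl⟩ : ∃ (x : Fin m → ℝ) (y : Fin n → ℝ), Sum.elim x y = z :=
    ⟨_, _, Sum.elim_comp_inl_inr z⟩
  rw [fromBlocks_mulVec] at hz2
  simp only [Sum.elim_comp_inl, Sum.elim_comp_inr] at hz2
  have heq1 : A *ᵥ x + B *ᵥ y = minEig hW • x := by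
    funext i
    have := congrFun hz2 (Sum.inl i)
    simpa using this
  have heq2 : Bᵀ *ᵥ x + C *ᵥ y = minEig hW • y := by
    funext j
    have := congrFun hz2 (Sum.inr j)
    simpa using this
  rw [sumElim_dotProduct_sumElim] at hz1
  have hBt : y ⬝ᵥ (Bᵀ *ᵥ x) = x ⬝ᵥ (B *ᵥ y) := by
    rw [dotProduct_mulVec, vecMul_transpose, dotProduct_comm]
  have e1 : x ⬝ᵥ (A *ᵥ x) + x ⬝ᵥ (B *ᵥ y) = minEig hW * (x ⬝ᵥ x) := by
    have := congrArg (fun w => x ⬝ᵥ w) heq1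
    simpa [dotProduct_add, dotProduct_smul, smul_eq_mul] using this
  have e2 : x ⬝ᵥ (B *ᵥ y) + y ⬝ᵥ (C *ᵥ y) = minEig hW * (y ⬝ᵥ y) := by
    have := congrArg (fun w => y ⬝ᵥ w) heq2
    simpa [dotProduct_add, dotProduct_smul, smul_eq_mul, hBt] using this
  have hA0 : minEig hA.isHermitian * (x ⬝ᵥ x) ≤ x ⬝ᵥ (A *ᵥ x) :=
    minEig_mul_le hA.isHermitian x
  have hC0 : minEig hC.1 * (y ⬝ᵥ y) ≤ y ⬝ᵥ (C *ᵥ y) := minEig_mul_le hC.1 y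
  have hs_nonneg : 0 ≤ x ⬝ᵥ x := Finset.sum_nonneg fun i _ => mul_self_nonneg _
  have hr_nonneg : 0 ≤ y ⬝ᵥ y := Finset.sum_nonneg fun i _ => mul_self_nonneg _
  have hs_pos : 0 < x ⬝ᵥ x := by
    rcases hs_nonneg.lt_or_eq with h | h
    · exact h
    · exfalso
      have hx0 : x = 0 := dotProduct_self_eq_zero.mp h.symm
      have ha00 : x ⬝ᵥ (A *ᵥ x) = 0 := by rw [hx0, zero_dotProduct]
      have hβ0 : x ⬝ᵥ (B *ᵥ y) = 0 := by rw [hx0, zero_dotProduct]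
      nlinarith [hC0, hcase]
  have hr_pos : 0 < y ⬝ᵥ y := by
    rcases hr_nonneg.lt_or_eq with h | h
    · exact h
    · exfalso
      have hy0 : y = 0 := dotProduct_self_eq_zero.mp h.symm
      have hc00 : y ⬝ᵥ (C *ᵥ y) = 0 := by rw [hy0, zero_dotProduct]
      have hβ0 : x ⬝ᵥ (B *ᵥ y) = 0 := by rw [hy0, mulVec_zero, dotProduct_zero]
      nlinarith [hA0, hlA_pos, hcase, hlC_nonpos]
  -- test vector
  have hbd := le_maxEig_mul hW
    (Sum.elim ((y ⬝ᵥ y) • x) ((-(x ⬝ᵥ x)) • y))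
  rw [fromBlocks_mulVec, sumElim_dotProduct_sumElim,
      sumElim_dotProduct_sumElim] at hbd
  simp only [Sum.elim_comp_inl, Sum.elim_comp_inr] at hbd
  have hquad : ((y ⬝ᵥ y) • x) ⬝ᵥ (A *ᵥ ((y ⬝ᵥ y) • x) + B *ᵥ ((-(x ⬝ᵥ x)) • y))
      + ((-(x ⬝ᵥ x)) • y) ⬝ᵥ (Bᵀ *ᵥ ((y ⬝ᵥ y) • x) + C *ᵥ ((-(x ⬝ᵥ x)) • y))
      = (y ⬝ᵥ y)^2 * (x ⬝ᵥ (A *ᵥ x)) - 2*(x ⬝ᵥ x)*(y ⬝ᵥ y)*(x ⬝ᵥ (B *ᵥ y))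
        + (x ⬝ᵥ x)^2 * (y ⬝ᵥ (C *ᵥ y)) := by
    simp only [mulVec_smul, dotProduct_add, dotProduct_smul, smul_dotProduct,
      smul_eq_mul, hBt]
    ring
  have hnormq : ((y ⬝ᵥ y) • x) ⬝ᵥ ((y ⬝ᵥ y) • x)
      + ((-(x ⬝ᵥ x)) • y) ⬝ᵥ ((-(x ⬝ᵥ x)) • y)
      = (y ⬝ᵥ y)^2 * (x ⬝ᵥ x) + (x ⬝ᵥ x)^2 * (y ⬝ᵥ y) := by
    simp only [dotProduct_smul, smul_dotProduct, smul_eq_mul]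
    ring
  rw [hquad, hnormq] at hbd
  exact saddle_alg _ _ _ _ _ _ _ _ _ hz1 e1 e2 hA0 hC0 hs_pos hr_pos hbd
end

section
/- Let W be the real symmetric (m+n)×(m+n) saddle point matrix W = [[A, B], [Bᵀ, C]], where A ∈ ℝ^{m×m} is symmetric positive definite, B ∈ ℝ^{m×n}, and C ∈ ℝ^{n×n} is symmetric negative semidefinite. If λ_min(A) + λ_min(C) ≥ 0, then W possesses the quasi-Perron-Frobenius property, i.e., the spectral radius ρ(W) is an eigenvalue of W; equivalently, ρ(W) = λ_max(W). -/
open Matrix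

section Rayleigh
variable {k : Type*} [Fintype k] [DecidableEq k] {M : Matrix k k ℝ}

lemma quad_spectral_aux (hM : M.IsHermitian) (x : k → ℝ) :
    x ⬝ᵥ (M *ᵥ x) = ∑ i, hM.eigenvalues i *
      ((star (hM.eigenvectorUnitary : Matrix k k ℝ) *ᵥ x) i)^2 ∧
    x ⬝ᵥ x = ∑ i, ((star (hM.eigenvectorUnitary : Matrix k k ℝ) *ᵥ x) i)^2 := by
  set U : Matrix k k ℝ := (hM.eigenvectorUnitary : Matrix k k ℝ) with hU
  have hsU : star U = Uᵀ := by
    rw [star_eq_conjTranspose, conjTranspose_eq_transpose_of_trivial]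
  have hU1 : U * star U = 1 := (mem_unitaryGroup_iff).mp hM.eigenvectorUnitary.2
  set y : k → ℝ := star U *ᵥ x with hy
  have hxy : U *ᵥ y = x := by rw [hy, mulVec_mulVec, hU1, one_mulVec]
  have key : ∀ z : k → ℝ, x ⬝ᵥ (U *ᵥ z) = y ⬝ᵥ z := by
    intro z
    rw [dotProduct_mulVec, ← mulVec_transpose, ← hsU, hy]
  constructor
  · conv_lhs => rw [hM.spectral_theorem, Unitary.conjStarAlgAut_apply, ← hU]
    rw [← mulVec_mulVec, ← mulVec_mulVec, key]
    rw [dotProduct, Finset.sum_congr rfl]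
    intro i _
    rw [mulVec_diagonal]
    simp only [← hy, Function.comp_apply, RCLike.ofReal_real_eq_id, id_eq]
    ring
  · calc x ⬝ᵥ x = x ⬝ᵥ (U *ᵥ y) := by rw [hxy]
      _ = y ⬝ᵥ y := key y
      _ = ∑ i, y i ^ 2 := by
          rw [dotProduct]; exact Finset.sum_congr rfl fun i _ => (sq (y i)).symm

lemma minEig_quad_le [Nonempty k] (hM : M.IsHermitian) (x : k → ℝ) :
    minEig hM * (x ⬝ᵥ x) ≤ x ⬝ᵥ (M *ᵥ x) := by
  obtain ⟨h1, h2⟩ := quad_spectral_aux hM x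
  rw [h1, h2, Finset.mul_sum]
  refine Finset.sum_le_sum fun i _ => ?_
  exact mul_le_mul_of_nonneg_right (ciInf_le (Finite.bddBelow_range _) i) (sq_nonneg _)

lemma quad_le_maxEig [Nonempty k] (hM : M.IsHermitian) (x : k → ℝ) :
    x ⬝ᵥ (M *ᵥ x) ≤ maxEig hM * (x ⬝ᵥ x) := by
  obtain ⟨h1, h2⟩ := quad_spectral_aux hM x
  rw [h1, h2, Finset.mul_sum]
  refine Finset.sum_le_sum fun i _ => ?_
  exact mul_le_mul_of_nonneg_right (le_ciSup (Finite.bddAbove_range _) i) (sq_nonneg _)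

omit [DecidableEq k] in
lemma dotProduct_self_nonneg' (x : k → ℝ) : 0 ≤ x ⬝ᵥ x :=
  Finset.sum_nonneg fun i _ => mul_self_nonneg (x i)

end Rayleigh

theorem stmt_6 (m n : ℕ) (hm : 0 < m) (hn : 0 < n)
    (A : Matrix (Fin m) (Fin m) ℝ) (B : Matrix (Fin m) (Fin n) ℝ)
    (C : Matrix (Fin n) (Fin n) ℝ)
    (hA : A.PosDef) (hC : C.NegSemidefinite)
    (hW : (fromBlocks A B Bᵀ C).IsHermitian)
    (h : 0 ≤ minEig hA.isHermitian + minEig hC.1) :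
    (∃ v : Fin m ⊕ Fin n → ℝ, v ≠ 0 ∧
        (fromBlocks A B Bᵀ C) *ᵥ v = specRad hW • v) ∧
    specRad hW = maxEig hW := by
  haveI : Nonempty (Fin m) := Fin.pos_iff_nonempty.mp hm
  haveI : Nonempty (Fin n) := Fin.pos_iff_nonempty.mp hn
  set W : Matrix (Fin m ⊕ Fin n) (Fin m ⊕ Fin n) ℝ := fromBlocks A B Bᵀ C with hWdef
  set a : ℝ := minEig hA.isHermitian with ha
  set c : ℝ := minEig hC.1 with hc
  -- maxEig hW is at least a
  have maxA : a ≤ maxEig hW := by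
    set u₀ : Fin m → ℝ := Pi.single (Classical.arbitrary (Fin m)) 1 with hu₀def
    have hu₀ : u₀ ⬝ᵥ u₀ = 1 := by
      simp [hu₀def, dotProduct, Pi.single_apply]
    have hz1 : Sum.elim u₀ (0 : Fin n → ℝ) ⬝ᵥ (W *ᵥ Sum.elim u₀ 0) = u₀ ⬝ᵥ (A *ᵥ u₀) := by
      rw [hWdef, fromBlocks_mulVec, sumElim_dotProduct_sumElim]
      simp
    have hz2 : Sum.elim u₀ (0 : Fin n → ℝ) ⬝ᵥ Sum.elim u₀ (0 : Fin n → ℝ) = 1 := by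
      rw [sumElim_dotProduct_sumElim]; simp [hu₀]
    have l1 := minEig_quad_le hA.isHermitian u₀
    have l2 := quad_le_maxEig hW (Sum.elim u₀ 0)
    rw [hz1, hz2, mul_one] at l2
    rw [hu₀, mul_one] at l1
    linarith
  -- the key inequality : every eigenvalue of W is at least -(maxEig hW)
  have key : ∀ i, -(hW.eigenvalues i) ≤ maxEig hW := by
    intro i
    set lam : ℝ := hW.eigenvalues i with hlam
    rcases le_or_gt 0 lam with hpos | hneg
    · have hle : hW.eigenvalues i ≤ maxEig hW :=
        le_ciSup (Finite.bddAbove_range hW.eigenvalues) i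
      linarith [hlam.le, hlam.ge]
    set x : Fin m ⊕ Fin n → ℝ := ⇑(hW.eigenvectorBasis i) with hxdef
    have hx : W *ᵥ x = lam • x := hW.mulVec_eigenvectorBasis i
    have hxne : x ≠ 0 := by
      intro h0
      exact hW.eigenvectorBasis.orthonormal.ne_zero i (by ext j; exact congrFun h0 j)
    set u : Fin m → ℝ := fun j => x (Sum.inl j) with hu
    set v : Fin n → ℝ := fun j => x (Sum.inr j) with hv
    have hxuv : x = Sum.elim u v := by funext s; cases s <;> rfl
    rw [hxuv, hWdef, fromBlocks_mulVec] at hx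
    have h1 : A *ᵥ u + B *ᵥ v = lam • u := by
      funext j; simpa using congrFun hx (Sum.inl j)
    have h2 : Bᵀ *ᵥ u + C *ᵥ v = lam • v := by
      funext j; simpa using congrFun hx (Sum.inr j)
    set α : ℝ := u ⬝ᵥ (A *ᵥ u) with hα
    set β : ℝ := u ⬝ᵥ (B *ᵥ v) with hβ
    set γ : ℝ := v ⬝ᵥ (C *ᵥ v) with hγ
    set p : ℝ := u ⬝ᵥ u with hp
    set q : ℝ := v ⬝ᵥ v with hq
    have hββ : v ⬝ᵥ (Bᵀ *ᵥ u) = β := by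
      rw [dotProduct_mulVec, vecMul_transpose, dotProduct_comm]
    have hαβ : α + β = lam * p := by
      have := congrArg (fun w => u ⬝ᵥ w) h1
      simpa [dotProduct_add, dotProduct_smul, smul_eq_mul, hα, hβ, hp] using this
    have hβγ : β + γ = lam * q := by
      have := congrArg (fun w => v ⬝ᵥ w) h2
      simpa [dotProduct_add, dotProduct_smul, smul_eq_mul, hββ, hγ, hq] using this
    have hp0 : 0 ≤ p := dotProduct_self_nonneg' u
    have hq0 : 0 ≤ q := dotProduct_self_nonneg' v
    have hαa : a * p ≤ α := minEig_quad_le hA.isHermitian u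
    have hγc : c * q ≤ γ := minEig_quad_le hC.1 v
    by_cases hv0 : v = 0
    · -- then u ≠ 0 and A *ᵥ u = lam • u with lam < 0, contradicting posdef
      have hu0 : u ≠ 0 := by
        intro h0
        exact hxne (by rw [hxuv, h0, hv0]; funext s; cases s <;> rfl
        )
      have hβ0 : β = 0 := by rw [hβ, hv0, mulVec_zero, dotProduct_zero]
      have hppos : 0 < p := by
        rcases hp0.lt_or_eq with h' | h'
        · exact h'
        · exact absurd ((dotProduct_self_eq_zero).mp h'.symm) hu0
      have hposA : 0 < α := by
        have := hA.dotProduct_mulVec_pos hu0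
        simpa [hα, star_trivial] using this
      nlinarith
    by_cases hu0 : u = 0
    · -- then C *ᵥ v = lam • v, so lam ≥ c
      have hβ0 : β = 0 := by rw [hβ, hu0, zero_dotProduct]
      have hqpos : 0 < q := by
        rcases hq0.lt_or_eq with h' | h'
        · exact h'
        · exact absurd ((dotProduct_self_eq_zero).mp h'.symm) hv0
      have hγlam : γ = lam * q := by linarith
      have hclam : c ≤ lam := by nlinarith
      linarith
    -- main case : both u and v nonzero
    have hppos : 0 < p := by
      rcases hp0.lt_or_eq with h' | h'
      · exact h'
      · exact absurd ((dotProduct_self_eq_zero).mp h'.symm) hu0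
    have hqpos : 0 < q := by
      rcases hq0.lt_or_eq with h' | h'
      · exact h'
      · exact absurd ((dotProduct_self_eq_zero).mp h'.symm) hv0
    set w : Fin m ⊕ Fin n → ℝ := Sum.elim (q • u) ((-p) • v) with hwdef
    have hw1 : w ⬝ᵥ (W *ᵥ w) = q^2*α - 2*(p*q)*β + p^2*γ := by
      rw [hwdef, hWdef, fromBlocks_mulVec, sumElim_dotProduct_sumElim]
      simp only [Sum.elim_comp_inl, Sum.elim_comp_inr, mulVec_smul, dotProduct_add,
        dotProduct_smul, smul_dotProduct, smul_eq_mul, hββ]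
      rw [← hα, ← hβ, ← hγ]
      ring
    have hww : w ⬝ᵥ w = q^2*p + p^2*q := by
      rw [hwdef, sumElim_dotProduct_sumElim]
      simp only [dotProduct_smul, smul_dotProduct, smul_eq_mul]
      rw [← hp, ← hq]
      ring
    have hray := quad_le_maxEig hW w
    rw [hw1, hww] at hray
    have e2 : (p+q)*(q*α + p*γ - lam*(p*q)) ≤ (p+q)*(maxEig hW * (p*q)) := by
      calc (p+q)*(q*α + p*γ - lam*(p*q))
          = q^2*α - 2*(p*q)*β + p^2*γ := by
            linear_combination (p*q) * hαβ + (p*q) * hβγ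
        _ ≤ maxEig hW * (q^2*p + p^2*q) := hray
        _ = (p+q)*(maxEig hW * (p*q)) := by ring
    have e3 : q*α + p*γ - lam*(p*q) ≤ maxEig hW * (p*q) :=
      le_of_mul_le_mul_left e2 (by linarith)
    have hprod : -lam * (p*q) ≤ maxEig hW * (p*q) := by
      have i1 : q*(a*p) ≤ q*α := mul_le_mul_of_nonneg_left hαa hq0
      have i2 : p*(c*q) ≤ p*γ := mul_le_mul_of_nonneg_left hγc hp0
      have i3 : 0 ≤ (a+c)*(p*q) := mul_nonneg h (mul_pos hppos hqpos).le
      nlinarith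
    exact le_of_mul_le_mul_right hprod (mul_pos hppos hqpos)
  -- conclude
  have hsr_le : specRad hW ≤ maxEig hW := by
    refine ciSup_le fun i => abs_le.mpr ⟨?_, le_ciSup (Finite.bddAbove_range _) i⟩
    linarith [key i]
  have hmax_le : maxEig hW ≤ specRad hW :=
    ciSup_mono (Finite.bddAbove_range _) fun i => le_abs_self _
  have heq : specRad hW = maxEig hW := le_antisymm hsr_le hmax_le
  refine ⟨?_, heq⟩
  obtain ⟨j, hj⟩ := Finite.exists_max hW.eigenvalues
  have hjmax : hW.eigenvalues j = maxEig hW :=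
    le_antisymm (le_ciSup (Finite.bddAbove_range _) j) (ciSup_le hj)
  refine ⟨⇑(hW.eigenvectorBasis j), ?_, ?_⟩
  · intro h0
    exact hW.eigenvectorBasis.orthonormal.ne_zero j (by ext i; exact congrFun h0 i)
  · rw [heq, ← hjmax, hW.mulVec_eigenvectorBasis]
end

section
/- Let W be the real symmetric (m+n)×(m+n) saddle point matrix W = [[A, B], [Bᵀ, C]], where A ∈ ℝ^{m×m} is symmetric positive definite, B ∈ ℝ^{m×n}, and C ∈ ℝ^{n×n} is symmetric negative semidefinite. If λ_min(A) + λ_min(C) > 0, then ρ(W) = λ_max(W) and λ_max(W) ≠ −λ_min(W). -/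
open Matrix

lemma myShiftPSD {k : Type*} [Fintype k] [DecidableEq k] {M : Matrix k k ℝ}
    (hM : M.IsHermitian) {c : ℝ} (h : ∀ i, c ≤ hM.eigenvalues i) :
    (M - c • 1).PosSemidef := by
  have hU : (hM.eigenvectorUnitary : Matrix k k ℝ) * star (hM.eigenvectorUnitary : Matrix k k ℝ) = 1 :=
    mem_unitaryGroup_iff.mp hM.eigenvectorUnitary.2
  have key : M - c • 1 = (hM.eigenvectorUnitary : Matrix k k ℝ) *
      diagonal (fun i => hM.eigenvalues i - c) *
      (hM.eigenvectorUnitary : Matrix k k ℝ)ᴴ := by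
    conv_lhs => rw [hM.spectral_theorem]
    rw [← star_eq_conjTranspose]
    have h1 : (c • (1 : Matrix k k ℝ)) = (hM.eigenvectorUnitary : Matrix k k ℝ) *
        (c • (1:Matrix k k ℝ)) * star (hM.eigenvectorUnitary : Matrix k k ℝ) := by
      rw [Matrix.mul_smul, mul_one, Matrix.smul_mul, hU]
    conv_lhs => rw [h1]
    rw [Unitary.conjStarAlgAut_apply, ← Matrix.sub_mul, ← Matrix.mul_sub, smul_one_eq_diagonal, diagonal_sub]
    congr 1
  rw [key]
  exact (posSemidef_diagonal_iff.mpr (fun i => sub_nonneg.mpr (h i))).mul_mul_conjTranspose_same _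

lemma myShiftPSD' {k : Type*} [Fintype k] [DecidableEq k] {M : Matrix k k ℝ}
    (hM : M.IsHermitian) {c : ℝ} (h : ∀ i, hM.eigenvalues i ≤ c) :
    (c • 1 - M).PosSemidef := by
  have hU : (hM.eigenvectorUnitary : Matrix k k ℝ) * star (hM.eigenvectorUnitary : Matrix k k ℝ) = 1 :=
    mem_unitaryGroup_iff.mp hM.eigenvectorUnitary.2
  have key : c • 1 - M = (hM.eigenvectorUnitary : Matrix k k ℝ) *
      diagonal (fun i => c - hM.eigenvalues i) *
      (hM.eigenvectorUnitary : Matrix k k ℝ)ᴴ := by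
    conv_lhs => rw [hM.spectral_theorem]
    rw [← star_eq_conjTranspose]
    have h1 : (c • (1 : Matrix k k ℝ)) = (hM.eigenvectorUnitary : Matrix k k ℝ) *
        (c • (1:Matrix k k ℝ)) * star (hM.eigenvectorUnitary : Matrix k k ℝ) := by
      rw [Matrix.mul_smul, mul_one, Matrix.smul_mul, hU]
    conv_lhs => rw [h1]
    rw [Unitary.conjStarAlgAut_apply, ← Matrix.sub_mul, ← Matrix.mul_sub, smul_one_eq_diagonal, diagonal_sub]
    congr 1
  rw [key]
  exact (posSemidef_diagonal_iff.mpr (fun i => sub_nonneg.mpr (h i))).mul_mul_conjTranspose_same _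

lemma rayleigh_min {k : Type*} [Fintype k] [DecidableEq k] {M : Matrix k k ℝ}
    (hM : M.IsHermitian) (x : k → ℝ) :
    minEig hM * (x ⬝ᵥ x) ≤ x ⬝ᵥ (M *ᵥ x) := by
  have hps := myShiftPSD hM (c := ⨅ i, hM.eigenvalues i)
    (fun i => ciInf_le (Set.finite_range _).bddBelow i)
  have h2 := hps.dotProduct_mulVec_nonneg x
  simp only [star_trivial, sub_mulVec, dotProduct_sub, smul_mulVec, one_mulVec,
    dotProduct_smul, smul_eq_mul] at h2
  rw [minEig]; linarith

lemma rayleigh_max {k : Type*} [Fintype k] [DecidableEq k] {M : Matrix k k ℝ}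
    (hM : M.IsHermitian) (x : k → ℝ) :
    x ⬝ᵥ (M *ᵥ x) ≤ maxEig hM * (x ⬝ᵥ x) := by
  have hps := myShiftPSD' hM (c := ⨆ i, hM.eigenvalues i)
    (fun i => le_ciSup (Set.finite_range _).bddAbove i)
  have h2 := hps.dotProduct_mulVec_nonneg x
  simp only [star_trivial, sub_mulVec, dotProduct_sub, smul_mulVec, one_mulVec,
    dotProduct_smul, smul_eq_mul] at h2
  rw [maxEig]; linarith

lemma exists_eq_iSup {k : Type*} [Fintype k] [Nonempty k] (f : k → ℝ) : ∃ i, f i = ⨆ j, f j := by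
  obtain ⟨i, hi⟩ := Finite.exists_max f
  exact ⟨i, le_antisymm (le_ciSup (Set.finite_range f).bddAbove i) (ciSup_le hi)⟩

lemma exists_eq_iInf {k : Type*} [Fintype k] [Nonempty k] (f : k → ℝ) : ∃ i, f i = ⨅ j, f j := by
  obtain ⟨i, hi⟩ := Finite.exists_min f
  exact ⟨i, le_antisymm (le_ciInf hi) (ciInf_le (Set.finite_range f).bddBelow i)⟩

theorem stmt_7 (m n : ℕ) (hm : 0 < m) (hn : 0 < n)
    (A : Matrix (Fin m) (Fin m) ℝ) (B : Matrix (Fin m) (Fin n) ℝ)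
    (C : Matrix (Fin n) (Fin n) ℝ)
    (hA : A.PosDef) (hC : C.NegSemidefinite)
    (hW : (fromBlocks A B Bᵀ C).IsHermitian)
    (h : 0 < minEig hA.isHermitian + minEig hC.1) :
    specRad hW = maxEig hW ∧ maxEig hW ≠ -minEig hW := by
  haveI : Nonempty (Fin m) := ⟨⟨0, hm⟩⟩
  haveI : Nonempty (Fin n) := ⟨⟨0, hn⟩⟩
  haveI : Nonempty (Fin m ⊕ Fin n) := ⟨Sum.inl ⟨0, hm⟩⟩
  set la := minEig hA.isHermitian with hla_def
  set lc := minEig hC.1 with hlc_def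
  set lam := minEig hW with hlam_def
  -- la > 0
  have hla_pos : 0 < la := by
    obtain ⟨i, hi⟩ := exists_eq_iInf hA.isHermitian.eigenvalues
    rw [hla_def, minEig, ← hi]
    exact hA.eigenvalues_pos i
  -- eigenvector for minimal eigenvalue of W
  obtain ⟨kmin, hkmin⟩ := exists_eq_iInf hW.eigenvalues
  set x : (Fin m ⊕ Fin n) → ℝ := ⇑(hW.eigenvectorBasis kmin) with hx_def
  have hxnorm : x ⬝ᵥ x = 1 := by
    have h1 : ‖hW.eigenvectorBasis kmin‖ = 1 := hW.eigenvectorBasis.orthonormal.1 kmin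
    have h2 : inner (𝕜 := ℝ) (hW.eigenvectorBasis kmin) (hW.eigenvectorBasis kmin) = (1:ℝ) := by
      rw [real_inner_self_eq_norm_sq, h1]; norm_num
    rw [← h2]; simp only [dotProduct, PiLp.inner_apply, RCLike.inner_apply, conj_trivial, hx_def]
  have heig : (fromBlocks A B Bᵀ C) *ᵥ x = lam • x := by
    rw [hx_def, hW.mulVec_eigenvectorBasis, hkmin, hlam_def, minEig]
  set u : Fin m → ℝ := fun i => x (Sum.inl i) with hu_def
  set v : Fin n → ℝ := fun j => x (Sum.inr j) with hv_def
  have hx : x = Sum.elim u v := by funext z; cases z <;> rfl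
  set t := u ⬝ᵥ u with ht_def
  set vv := v ⬝ᵥ v with hvv_def
  have htv : t + vv = 1 := by
    rw [hx, sumElim_dotProduct_sumElim] at hxnorm; exact hxnorm
  set a := u ⬝ᵥ (A *ᵥ u) with ha_def
  set w := v ⬝ᵥ (C *ᵥ v) with hw_def
  set s := u ⬝ᵥ (B *ᵥ v) with hs_def
  have hrow1 : A *ᵥ u + B *ᵥ v = lam • u := by
    funext i
    have := congrFun heig (Sum.inl i)
    rw [hx] at this
    simpa [fromBlocks_mulVec] using this
  have hrow2 : Bᵀ *ᵥ u + C *ᵥ v = lam • v := by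
    funext j
    have := congrFun heig (Sum.inr j)
    rw [hx] at this
    simpa [fromBlocks_mulVec] using this
  have hsym : v ⬝ᵥ (Bᵀ *ᵥ u) = s := by
    rw [hs_def, dotProduct_mulVec v, vecMul_transpose, dotProduct_comm]
  have e1 : a + s = lam * t := by
    have := congrArg (fun y => u ⬝ᵥ y) hrow1
    simpa [dotProduct_add, dotProduct_smul, ha_def, hs_def, ht_def] using this
  have e2 : s + w = lam * vv := by
    have := congrArg (fun y => v ⬝ᵥ y) hrow2
    simpa [dotProduct_add, dotProduct_smul, hsym, hw_def, hvv_def] using this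
  have ht0 : 0 ≤ t := Finset.sum_nonneg fun i _ => mul_self_nonneg _
  have hvv0 : 0 ≤ vv := Finset.sum_nonneg fun i _ => mul_self_nonneg _
  have hA_ray : la * t ≤ a := rayleigh_min hA.isHermitian u
  have hC_ray : lc * vv ≤ w := rayleigh_min hC.1 v
  -- the key inequality
  have key : 0 < maxEig hW + lam := by
    rcases eq_or_lt_of_le ht0 with ht | ht
    · -- u = 0
      have hu0 : u = 0 := dotProduct_self_eq_zero.mp ht.symm
      have hs0 : s = 0 := by rw [hs_def, hu0, zero_dotProduct]
      have hvv1 : vv = 1 := by linarith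
      have hlam : lc ≤ lam := by
        rw [hvv1] at hC_ray e2
        rw [hs0] at e2
        linarith
      -- maxEig ≥ la using test vector supported on the first block
      set u0 : Fin m → ℝ := Pi.single ⟨0, hm⟩ 1 with hu0_def
      have hu0n : u0 ⬝ᵥ u0 = 1 := by simp [hu0_def]
      set y : (Fin m ⊕ Fin n) → ℝ := Sum.elim u0 0 with hy_def
      have hyW : y ⬝ᵥ ((fromBlocks A B Bᵀ C) *ᵥ y) = u0 ⬝ᵥ (A *ᵥ u0) := by
        rw [hy_def, fromBlocks_mulVec, sumElim_dotProduct_sumElim]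
        simp
      have h1 : la * 1 ≤ u0 ⬝ᵥ (A *ᵥ u0) := by
        have := rayleigh_min hA.isHermitian u0
        rwa [hu0n] at this
      have h2 := rayleigh_max hW y
      have hyn : y ⬝ᵥ y = 1 := by
        rw [hy_def, sumElim_dotProduct_sumElim, hu0n]; simp
      rw [hyn, hyW, mul_one] at h2
      linarith
    · rcases eq_or_lt_of_le hvv0 with hvv | hvv
      · -- v = 0
        have hv0 : v = 0 := dotProduct_self_eq_zero.mp hvv.symm
        have hs0 : s = 0 := by rw [hs_def, hv0, mulVec_zero, dotProduct_zero]
        have ht1 : t = 1 := by linarith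
        have hlam : la ≤ lam := by
          rw [ht1] at hA_ray e1
          rw [hs0] at e1
          linarith
        have hmx : lam ≤ maxEig hW := by
          obtain ⟨j, hj⟩ := exists_eq_iSup hW.eigenvalues
          rw [hlam_def, minEig, maxEig, ← hj]
          exact ciInf_le (Set.finite_range _).bddBelow j
        linarith
      · -- generic case: 0 < t, 0 < vv
        set z : (Fin m ⊕ Fin n) → ℝ := Sum.elim (vv • u) ((-t) • v) with hz_def
        have hz1 : z ⬝ᵥ z = t * vv := by
          rw [hz_def, sumElim_dotProduct_sumElim]
          simp only [smul_dotProduct, dotProduct_smul, smul_eq_mul, ← ht_def, ← hvv_def]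
          linear_combination (t*vv) * htv
        have hz2 : z ⬝ᵥ ((fromBlocks A B Bᵀ C) *ᵥ z) = a - lam * t^2 := by
          rw [hz_def, fromBlocks_mulVec, sumElim_dotProduct_sumElim]
          simp only [Sum.elim_comp_inl, Sum.elim_comp_inr, mulVec_smul, dotProduct_add,
            dotProduct_smul, smul_dotProduct, smul_eq_mul, hsym, ← ha_def, ← hs_def, ← hw_def]
          linear_combination (-(2*t*vv + t^2)) * e1 + t^2 * e2 + (a*(vv+t+1) - lam*t^2) * htv
        have hz3 := rayleigh_max hW z
        rw [hz1, hz2] at hz3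
        have hid : a - lam * t^2 + lam * (t * vv) = a * vv + t * w := by
          linear_combination t * e1 - t * e2 - a * htv
        have htvpos : 0 < t * vv := mul_pos ht hvv
        have h6 : (la + lc) * (t * vv) ≤ (maxEig hW + lam) * (t * vv) := by
          nlinarith [mul_le_mul_of_nonneg_right hA_ray hvv0,
            mul_le_mul_of_nonneg_right hC_ray ht0]
        have h7 : 0 < (maxEig hW + lam) * (t * vv) :=
          lt_of_lt_of_le (mul_pos h htvpos) h6
        nlinarith [htvpos]
  -- conclude
  constructor
  · apply le_antisymm
    · apply ciSup_le
      intro i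
      apply abs_le.mpr
      constructor
      · have h1 : lam ≤ hW.eigenvalues i := ciInf_le (Set.finite_range _).bddBelow i
        linarith
      · exact le_ciSup (Set.finite_range _).bddAbove i
    · obtain ⟨j, hj⟩ := exists_eq_iSup hW.eigenvalues
      calc maxEig hW = hW.eigenvalues j := hj.symm
        _ ≤ |hW.eigenvalues j| := le_abs_self _
        _ ≤ ⨆ i, |hW.eigenvalues i| :=
            le_ciSup (Set.finite_range fun i => |hW.eigenvalues i|).bddAbove j
  · intro hcon
    rw [hcon] at key
    linarith
end

section
/- Let W be the real symmetric (m+n)×(m+n) saddle point matrix W = [[A, B], [Bᵀ, C]], where A ∈ ℝ^{m×m} is symmetric positive definite, B ∈ ℝ^{m×n}, and C ∈ ℝ^{n×n} is symmetric negative semidefinite. List the eigenvalues of W in decreasing order λ_1(W) ≥ λ_2(W) ≥ ... ≥ λ_{m+n}(W), counted with multiplicity. Then λ_{m+1}(W) ≤ 0 < λ_m(W); that is, W has at least m positive eigenvalues and at least n nonpositive eigenvalues (with multiplicity). -/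
open Matrix

private lemma myMulVec_sum {k l ι : Type*} [Fintype l] (s : Finset ι)
    (M : Matrix k l ℝ) (f : ι → (l → ℝ)) :
    M *ᵥ (∑ i ∈ s, f i) = ∑ i ∈ s, M *ᵥ f i :=
  map_sum M.mulVecLin f s

private lemma myDotProduct_sum {k ι : Type*} [Fintype k] (s : Finset ι)
    (x : k → ℝ) (f : ι → (k → ℝ)) :
    x ⬝ᵥ (∑ i ∈ s, f i) = ∑ i ∈ s, x ⬝ᵥ f i := by
  classical
  induction s using Finset.induction with
  | empty => simp
  | insert _ _ h ih => rw [Finset.sum_insert h, Finset.sum_insert h, dotProduct_add, ih]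

theorem stmt_9 (m n : ℕ) (hm : 0 < m) (hn : 0 < n)
    (A : Matrix (Fin m) (Fin m) ℝ) (B : Matrix (Fin m) (Fin n) ℝ)
    (C : Matrix (Fin n) (Fin n) ℝ)
    (hA : A.PosDef) (hC : C.NegSemidefinite)
    (hW : (fromBlocks A B Bᵀ C).IsHermitian) :
    m ≤ Set.ncard {i : Fin m ⊕ Fin n | 0 < hW.eigenvalues i} ∧
    n ≤ Set.ncard {i : Fin m ⊕ Fin n | hW.eigenvalues i ≤ 0} := by
  classical
  set W : Matrix (Fin m ⊕ Fin n) (Fin m ⊕ Fin n) ℝ := fromBlocks A B Bᵀ C with hWdef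
  set μ : (Fin m ⊕ Fin n) → ℝ := hW.eigenvalues with hμdef
  set v : (Fin m ⊕ Fin n) → ((Fin m ⊕ Fin n) → ℝ) := fun i => hW.eigenvectorBasis i with hvdef
  have h1 : ∀ i, W *ᵥ v i = μ i • v i := hW.mulVec_eigenvectorBasis
  have hinner : ∀ x y : EuclideanSpace ℝ (Fin m ⊕ Fin n), (inner ℝ x y : ℝ) = x ⬝ᵥ y := by
    intro x y; simp [PiLp.inner_apply, dotProduct, mul_comm]
  have horth : ∀ i j, v i ⬝ᵥ v j = if i = j then 1 else 0 := by
    intro i j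
    have := orthonormal_iff_ite.mp hW.eigenvectorBasis.orthonormal i j
    rw [hinner] at this
    simpa using this
  have hrepr : ∀ x : (Fin m ⊕ Fin n) → ℝ, ∑ i, (v i ⬝ᵥ x) • v i = x := by
    intro x
    have := congrArg WithLp.ofLp (hW.eigenvectorBasis.sum_repr' (WithLp.toLp 2 x))
    simp_rw [hinner] at this
    simpa [WithLp.ofLp_sum] using this
  have hv : LinearIndependent ℝ v :=
    hW.eigenvectorBasis.orthonormal.linearIndependent.map' (WithLp.linearEquiv 2 ℝ _).toLinearMap (LinearEquiv.ker _)
  -- quadratic form expansion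
  have quad : ∀ x : (Fin m ⊕ Fin n) → ℝ,
      x ⬝ᵥ (W *ᵥ x) = ∑ i, μ i * (v i ⬝ᵥ x) ^ 2 := by
    intro x
    calc x ⬝ᵥ (W *ᵥ x) = x ⬝ᵥ (W *ᵥ (∑ i, (v i ⬝ᵥ x) • v i)) := by rw [hrepr]
      _ = x ⬝ᵥ (∑ i, (v i ⬝ᵥ x) • (μ i • v i)) := by
            rw [myMulVec_sum]; simp_rw [mulVec_smul, h1]
      _ = ∑ i, (v i ⬝ᵥ x) • (μ i • (x ⬝ᵥ v i)) := by
            rw [myDotProduct_sum]; simp [dotProduct_smul]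
      _ = ∑ i, μ i * (v i ⬝ᵥ x) ^ 2 := by
            refine Finset.sum_congr rfl fun i _ => ?_
            rw [dotProduct_comm]; simp [smul_eq_mul]; ring
  -- orthogonality to spans
  have horthspan : ∀ (s : Set (Fin m ⊕ Fin n)) (i : Fin m ⊕ Fin n), i ∉ s →
      ∀ x ∈ Submodule.span ℝ (v '' s), v i ⬝ᵥ x = 0 := by
    intro s i his x hx
    induction hx using Submodule.span_induction with
    | mem y hy =>
        obtain ⟨j, hjs, rfl⟩ := hy
        rw [horth]
        simp only [ite_eq_right_iff]
        intro h; exact absurd (h ▸ hjs) his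
    | zero => simp
    | add y z _ _ hy hz => rw [dotProduct_add, hy, hz, add_zero]
    | smul c y _ hy => rw [dotProduct_smul, hy, smul_zero]
  have hspan_dim : ∀ s : Set (Fin m ⊕ Fin n),
      Module.finrank ℝ (Submodule.span ℝ (v '' s)) = s.ncard := by
    intro s
    have hcomp : Set.range (v ∘ ((↑) : s → (Fin m ⊕ Fin n))) = v '' s := by
      rw [Set.range_comp, Subtype.range_coe]
    rw [← hcomp, finrank_span_eq_card (hv.comp _ Subtype.val_injective)]
    rw [Set.ncard_eq_toFinset_card', Set.toFinset_card]
  -- positivity on the span of positive eigenvectors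
  set Spos : Set (Fin m ⊕ Fin n) := {i | 0 < μ i} with hSposdef
  set Sneg : Set (Fin m ⊕ Fin n) := {i | μ i ≤ 0} with hSnegdef
  have hposform : ∀ x ∈ Submodule.span ℝ (v '' Spos), x ≠ 0 → 0 < x ⬝ᵥ (W *ᵥ x) := by
    intro x hx hx0
    rw [quad]
    have hzero : ∀ i ∉ Spos, v i ⬝ᵥ x = 0 := fun i hi => horthspan _ i hi x hx
    have hex : ∃ i, v i ⬝ᵥ x ≠ 0 := by
      by_contra h
      push_neg at h
      apply hx0
      rw [← hrepr x]
      simp [h]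
    obtain ⟨i, hi⟩ := hex
    have hiS : i ∈ Spos := by
      by_contra h; exact hi (hzero i h)
    refine Finset.sum_pos' (fun j _ => ?_) ⟨i, Finset.mem_univ i, ?_⟩
    · by_cases hj : j ∈ Spos
      · exact mul_nonneg (le_of_lt hj) (sq_nonneg _)
      · rw [hzero j hj]; simp
    · exact mul_pos hiS (by positivity)
  have hnegform : ∀ x ∈ Submodule.span ℝ (v '' Sneg), x ⬝ᵥ (W *ᵥ x) ≤ 0 := by
    intro x hx
    rw [quad]
    refine Finset.sum_nonpos fun i _ => ?_
    by_cases hi : i ∈ Sneg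
    · exact mul_nonpos_of_nonpos_of_nonneg hi (sq_nonneg _)
    · rw [horthspan _ i hi x hx]; simp
  -- the subspace P
  let fP : (Fin m → ℝ) →ₗ[ℝ] ((Fin m ⊕ Fin n) → ℝ) :=
    { toFun := fun x => Sum.elim x 0
      map_add' := by intro x y; funext i; cases i <;> simp
      map_smul' := by intro c x; funext i; cases i <;> simp }
  have hfPinj : Function.Injective fP := by
    intro x y h
    funext i
    have := congrFun h (Sum.inl i)
    simpa [fP] using this
  have hPform : ∀ x ∈ LinearMap.range fP, x ≠ 0 → 0 < x ⬝ᵥ (W *ᵥ x) := by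
    rintro x ⟨a, rfl⟩ hx0
    have ha : a ≠ 0 := by
      intro h; apply hx0; rw [h]; funext i; cases i <;> simp [fP]
    have : (fP a) ⬝ᵥ (W *ᵥ fP a) = a ⬝ᵥ (A *ᵥ a) := by
      show (Sum.elim a 0) ⬝ᵥ (W *ᵥ Sum.elim a 0) = _
      rw [hWdef, fromBlocks_mulVec]
      simp [sumElim_dotProduct_sumElim]
    rw [this]
    have := hA.dotProduct_mulVec_pos ha
    simpa using this
  -- the subspace Q
  have hAdet : IsUnit A.det := by
    exact isUnit_iff_ne_zero.mpr (ne_of_gt hA.det_pos)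
  have hAinv : A⁻¹.PosDef := hA.inv
  let fQ : (Fin n → ℝ) →ₗ[ℝ] ((Fin m ⊕ Fin n) → ℝ) :=
    { toFun := fun y => Sum.elim (-(A⁻¹ *ᵥ (B *ᵥ y))) y
      map_add' := by intro x y; funext i; cases i <;> simp [mulVec_add, neg_add] <;> ring
      map_smul' := by intro c x; funext i; cases i <;> simp [mulVec_smul] }
  have hfQinj : Function.Injective fQ := by
    intro x y h
    funext j
    have := congrFun h (Sum.inr j)
    simpa [fQ] using this
  have hQform : ∀ x ∈ LinearMap.range fQ, x ⬝ᵥ (W *ᵥ x) ≤ 0 := by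
    rintro x ⟨y, rfl⟩
    have hAu : A *ᵥ (A⁻¹ *ᵥ (B *ᵥ y)) = B *ᵥ y := by
      rw [mulVec_mulVec, Matrix.mul_nonsing_inv A hAdet, one_mulVec]
    have hfirst : A *ᵥ (-(A⁻¹ *ᵥ (B *ᵥ y))) + B *ᵥ y = 0 := by
      rw [mulVec_neg, hAu, neg_add_cancel]
    have : (fQ y) ⬝ᵥ (W *ᵥ fQ y) =
        y ⬝ᵥ (Bᵀ *ᵥ (-(A⁻¹ *ᵥ (B *ᵥ y)))) + y ⬝ᵥ (C *ᵥ y) := by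
      show (Sum.elim (-(A⁻¹ *ᵥ (B *ᵥ y))) y) ⬝ᵥ (W *ᵥ Sum.elim (-(A⁻¹ *ᵥ (B *ᵥ y))) y) = _
      rw [hWdef, fromBlocks_mulVec]
      simp only [Sum.elim_comp_inl, Sum.elim_comp_inr]
      rw [hfirst, sumElim_dotProduct_sumElim, dotProduct_zero, zero_add, dotProduct_add]
    rw [this]
    have h2 : y ⬝ᵥ (Bᵀ *ᵥ (-(A⁻¹ *ᵥ (B *ᵥ y)))) = -((B *ᵥ y) ⬝ᵥ (A⁻¹ *ᵥ (B *ᵥ y))) := by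
      rw [mulVec_neg, dotProduct_neg, dotProduct_mulVec, vecMul_transpose]
    rw [h2]
    have h3 : 0 ≤ (B *ᵥ y) ⬝ᵥ (A⁻¹ *ᵥ (B *ᵥ y)) := by
      have := hAinv.posSemidef.dotProduct_mulVec_nonneg (B *ᵥ y)
      simpa using this
    have h4 := hC.2 y
    linarith
  -- dimension counting
  have hfull : Module.finrank ℝ ((Fin m ⊕ Fin n) → ℝ) = m + n := by
    simp [Module.finrank_pi]
  have hkey : ∀ (f : Submodule ℝ ((Fin m ⊕ Fin n) → ℝ)) (s : Set (Fin m ⊕ Fin n)),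
      f ⊓ Submodule.span ℝ (v '' s) = ⊥ →
      Module.finrank ℝ f + s.ncard ≤ m + n := by
    intro f s hdisj
    have := Submodule.finrank_sup_add_finrank_inf_eq f (Submodule.span ℝ (v '' s))
    rw [hdisj] at this
    simp only [finrank_bot, add_zero] at this
    rw [← hspan_dim s, ← this]
    calc Module.finrank ℝ ↥(f ⊔ Submodule.span ℝ (v '' s))
        ≤ Module.finrank ℝ ((Fin m ⊕ Fin n) → ℝ) := Submodule.finrank_le _
      _ = m + n := hfull
  have hdisj1 : LinearMap.range fP ⊓ Submodule.span ℝ (v '' Sneg) = ⊥ := by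
    rw [Submodule.eq_bot_iff]
    rintro x ⟨hx1, hx2⟩
    by_contra hx0
    exact absurd (hnegform x hx2) (not_le.mpr (hPform x hx1 hx0))
  have hdisj2 : LinearMap.range fQ ⊓ Submodule.span ℝ (v '' Spos) = ⊥ := by
    rw [Submodule.eq_bot_iff]
    rintro x ⟨hx1, hx2⟩
    by_contra hx0
    exact absurd (hQform x hx1) (not_le.mpr (hposform x hx2 hx0))
  have hrP : Module.finrank ℝ (LinearMap.range fP) = m := by
    rw [LinearMap.finrank_range_of_inj hfPinj]; simp [Module.finrank_pi]
  have hrQ : Module.finrank ℝ (LinearMap.range fQ) = n := by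
    rw [LinearMap.finrank_range_of_inj hfQinj]; simp [Module.finrank_pi]
  have hineq1 := hkey _ Sneg hdisj1
  have hineq2 := hkey _ Spos hdisj2
  rw [hrP] at hineq1
  rw [hrQ] at hineq2
  -- partition of cardinalities
  have hcompl : Sneg = Sposᶜ := by
    ext i; simp [hSposdef, hSnegdef, not_lt]
  have hsum : Spos.ncard + Sneg.ncard = m + n := by
    rw [hcompl, Set.ncard_add_ncard_compl]
    simp [Nat.card_eq_fintype_card]
  constructor
  · omega
  · omega
end

section
/- Let η > 0, let B ∈ ℝ^{m×n} with m ≥ n have rank n − r, and let W = [[ηI, B], [Bᵀ, O]] be the (m+n)×(m+n) real symmetric block matrix where I is the m×m identity matrix and O is the n×n zero matrix. Let σ_1 ≥ σ_2 ≥ ... ≥ σ_n ≥ 0 be the singular values of B (so σ_k > 0 exactly for k ≤ n − r). Then the m+n eigenvalues of W, counted with multiplicity, are: 0 with multiplicity r, η with multiplicity m − n + r, and the 2(n − r) numbers ½(η ± √(4σ_k² + η²)) for k = 1, ..., n − r. -/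
open Matrix

open Polynomial


lemma det_smul_one_sub {k : Type*} [Fintype k] [DecidableEq k]
    {M : Matrix k k ℝ} (hM : M.IsHermitian) (x : ℝ) :
    det (x • (1 : Matrix k k ℝ) - M) = ∏ i, (x - hM.eigenvalues i) := by
  set U : Matrix k k ℝ := (hM.eigenvectorUnitary : Matrix k k ℝ) with hUdef
  have hU : U * star U = 1 := mem_unitaryGroup_iff.mp hM.eigenvectorUnitary.2
  have key : x • (1 : Matrix k k ℝ) - M
      = U * (diagonal fun i => x - hM.eigenvalues i) * star U := by
    have hdiag : (diagonal fun i => x - hM.eigenvalues i)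
        = x • (1 : Matrix k k ℝ) - diagonal (RCLike.ofReal ∘ hM.eigenvalues) := by
      ext i j
      by_cases h : i = j <;> simp [diagonal, one_apply, h]
    rw [hdiag, Matrix.mul_sub, Matrix.sub_mul]; conv_lhs => rw [hM.spectral_theorem, Unitary.conjStarAlgAut_apply]
    congr 1
    simp [Matrix.mul_smul, Matrix.smul_mul, hU]
  rw [key, det_mul_right_comm, hU, Matrix.one_mul, det_diagonal]

lemma eval_prod_X_sub_C (s : Multiset ℝ) (x : ℝ) :
    eval x (s.map fun a => X - C a).prod = (s.map fun a => x - a).prod := by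
  rw [← Polynomial.coe_evalRingHom, map_multiset_prod, Multiset.map_map]
  simp [Function.comp]

lemma card_filter_fin_lt {n c : ℕ} (h : c ≤ n) :
    (Finset.univ.filter fun k : Fin n => (k:ℕ) < c).card = c := by
  have : (Finset.univ.filter fun k : Fin n => (k:ℕ) < c) = (Finset.range c).attachFin
      (fun m hm => lt_of_lt_of_le (Finset.mem_range.mp hm) h) := by
    ext k; simp
  rw [this, Finset.card_attachFin, Finset.card_range]

theorem stmt_10 (m n r : ℕ) (hmn : n ≤ m) (hr : r ≤ n)
    (η : ℝ) (hη : 0 < η)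
    (B : Matrix (Fin m) (Fin n) ℝ)
    (hrank : B.rank = n - r)
    (σ : Fin n → ℝ) (hσmono : Antitone σ) (hσnonneg : ∀ k, 0 ≤ σ k)
    (hBtB : (Bᵀ * B).IsHermitian)
    (hσ : Multiset.map (fun k => σ k ^ 2) Finset.univ.val
        = Multiset.map hBtB.eigenvalues Finset.univ.val)
    (hσpos : ∀ k : Fin n, 0 < σ k ↔ (k : ℕ) < n - r)
    (hW : (fromBlocks (η • (1 : Matrix (Fin m) (Fin m) ℝ)) B Bᵀ
        (0 : Matrix (Fin n) (Fin n) ℝ)).IsHermitian) :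
    Multiset.map hW.eigenvalues Finset.univ.val
      = Multiset.replicate r (0 : ℝ)
        + Multiset.replicate (m - n + r) η
        + Multiset.map (fun k => (η + Real.sqrt (4 * σ k ^ 2 + η ^ 2)) / 2)
            (Finset.univ.filter fun k : Fin n => (k : ℕ) < n - r).val
        + Multiset.map (fun k => (η - Real.sqrt (4 * σ k ^ 2 + η ^ 2)) / 2)
            (Finset.univ.filter fun k : Fin n => (k : ℕ) < n - r).val := by
  classical
  set W : Matrix (Fin m ⊕ Fin n) (Fin m ⊕ Fin n) ℝ :=
    fromBlocks (η • (1 : Matrix (Fin m) (Fin m) ℝ)) B Bᵀ 0 with hWdef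
  set F : Finset (Fin n) := Finset.univ.filter fun k : Fin n => (k : ℕ) < n - r with hF
  set s : Multiset ℝ := Multiset.map hW.eigenvalues Finset.univ.val with hs
  set t : Multiset ℝ := Multiset.replicate r (0 : ℝ)
        + Multiset.replicate (m - n + r) η
        + Multiset.map (fun k => (η + Real.sqrt (4 * σ k ^ 2 + η ^ 2)) / 2) F.val
        + Multiset.map (fun k => (η - Real.sqrt (4 * σ k ^ 2 + η ^ 2)) / 2) F.val with ht
  suffices h : (s.map fun a => X - C a).prod = (t.map fun a => X - C a).prod by
    have h2 := congrArg Polynomial.roots h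
    rwa [Polynomial.roots_multiset_prod_X_sub_C, Polynomial.roots_multiset_prod_X_sub_C] at h2
  apply Polynomial.eq_of_infinite_eval_eq
  apply Set.Infinite.mono (s := ({η}ᶜ : Set ℝ)) ?_ ((Set.finite_singleton η).infinite_compl)
  intro x hx
  have hxη : x - η ≠ 0 := sub_ne_zero.mpr hx
  show eval x _ = eval x _
  rw [eval_prod_X_sub_C, eval_prod_X_sub_C]
  -- LHS equals det (x • 1 - W)
  have hL : (s.map fun a => x - a).prod = det (x • (1 : Matrix (Fin m ⊕ Fin n) _ ℝ) - W) := by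
    rw [det_smul_one_sub hW, Finset.prod_eq_multiset_prod, hs, Multiset.map_map]
    rfl
  -- block structure
  have hblock : x • (1 : Matrix (Fin m ⊕ Fin n) (Fin m ⊕ Fin n) ℝ) - W
      = fromBlocks ((x - η) • (1 : Matrix (Fin m) (Fin m) ℝ)) (-B) (-Bᵀ)
          (x • (1 : Matrix (Fin n) (Fin n) ℝ)) := by
    ext (i | i) (j | j) <;>
      simp [hWdef, one_apply, Matrix.smul_apply, sub_smul] <;> split_ifs <;> ring
  haveI inst : Invertible ((x - η) • (1 : Matrix (Fin m) (Fin m) ℝ)) :=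
    ⟨(x - η)⁻¹ • (1 : Matrix (Fin m) (Fin m) ℝ),
      by rw [smul_mul_smul_comm, inv_mul_cancel₀ hxη, one_smul, Matrix.one_mul],
      by rw [smul_mul_smul_comm, mul_inv_cancel₀ hxη, one_smul, Matrix.one_mul]⟩
  have hinv : ⅟((x - η) • (1 : Matrix (Fin m) (Fin m) ℝ))
      = (x - η)⁻¹ • (1 : Matrix (Fin m) (Fin m) ℝ) :=
    invOf_eq_right_inv (by rw [smul_mul_smul_comm, mul_inv_cancel₀ hxη, one_smul, Matrix.one_mul])
  have hdet : det (x • (1 : Matrix (Fin m ⊕ Fin n) _ ℝ) - W)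
      = (x - η) ^ m * (((x - η)⁻¹) ^ n * ∏ i, (x * (x - η) - hBtB.eigenvalues i)) := by
    rw [hblock, det_fromBlocks₁₁, hinv]
    congr 1
    · rw [det_smul, det_one, Fintype.card_fin, mul_one]
    · have hc : (x - η)⁻¹ * (x * (x - η)) = x := by field_simp
      have hE : x • (1 : Matrix (Fin n) (Fin n) ℝ)
          - (-Bᵀ) * ((x - η)⁻¹ • (1 : Matrix (Fin m) (Fin m) ℝ)) * (-B)
          = (x - η)⁻¹ • ((x * (x - η)) • (1 : Matrix (Fin n) (Fin n) ℝ) - Bᵀ * B) := by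
        rw [smul_sub, smul_smul, hc]
        congr 1
        simp [Matrix.mul_smul, Matrix.smul_mul, Matrix.neg_mul, Matrix.mul_neg]
      rw [hE, det_smul, det_smul_one_sub hBtB, Fintype.card_fin]
  -- turn eigenvalue product into σ product
  have hprod : ∏ i, (x * (x - η) - hBtB.eigenvalues i) = ∏ k, (x * (x - η) - σ k ^ 2) := by
    rw [Finset.prod_eq_multiset_prod, Finset.prod_eq_multiset_prod,
      show (fun i => x * (x - η) - hBtB.eigenvalues i)
        = (fun a => x * (x - η) - a) ∘ hBtB.eigenvalues from rfl,
      show (fun k => x * (x - η) - σ k ^ 2)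
        = (fun a => x * (x - η) - a) ∘ (fun k => σ k ^ 2) from rfl,
      ← Multiset.map_map, ← Multiset.map_map, hσ]
  have hσzero : ∀ k : Fin n, ¬ ((k : ℕ) < n - r) → σ k = 0 := by
    intro k hk
    have h1 : ¬ (0 < σ k) := by rw [hσpos]; exact hk
    linarith [hσnonneg k]
  have hcardFc : (Finset.univ.filter fun k : Fin n => ¬ ((k : ℕ) < n - r)).card = r := by
    have h1 := Finset.card_filter_add_card_filter_not
      (s := (Finset.univ : Finset (Fin n))) (p := fun k : Fin n => (k : ℕ) < n - r)
    rw [Finset.card_univ, Fintype.card_fin] at h1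
    have h2 : (Finset.univ.filter fun k : Fin n => (k : ℕ) < n - r).card = n - r :=
      card_filter_fin_lt (Nat.sub_le n r)
    omega
  have hsplit : ∏ k, (x * (x - η) - σ k ^ 2)
      = (x * (x - η)) ^ r * ∏ k ∈ F, (x * (x - η) - σ k ^ 2) := by
    rw [← Finset.prod_filter_mul_prod_filter_not Finset.univ
      (fun k : Fin n => (k : ℕ) < n - r) (fun k => x * (x - η) - σ k ^ 2), mul_comm]
    congr 1
    rw [Finset.prod_congr rfl (fun k hk => ?_), Finset.prod_const, hcardFc]
    have hk0 : σ k = 0 := hσzero k (Finset.mem_filter.mp hk).2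
    rw [hk0]; ring
  -- RHS evaluation
  have hR : (t.map fun a => x - a).prod
      = x ^ r * (x - η) ^ (m - n + r) * ∏ k ∈ F, (x * (x - η) - σ k ^ 2) := by
    rw [ht]
    simp only [Multiset.map_add, Multiset.prod_add, Multiset.map_replicate,
      Multiset.prod_replicate, Multiset.map_map]
    rw [sub_zero]
    have hh : ∀ g : Fin n → ℝ,
        (Multiset.map ((fun a => x - a) ∘ g) F.val).prod = ∏ k ∈ F, (x - g k) :=
      fun g => (Finset.prod_eq_multiset_prod F _).symm
    rw [hh, hh, mul_assoc, ← Finset.prod_mul_distrib]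
    congr 1
    apply Finset.prod_congr rfl
    intro k hk
    have hd : Real.sqrt (4 * σ k ^ 2 + η ^ 2) ^ 2 = 4 * σ k ^ 2 + η ^ 2 :=
      Real.sq_sqrt (by positivity)
    linear_combination (-1/4 : ℝ) * hd
  rw [hL, hdet, hprod, hsplit, hR]
  have e1 : (x - η) ^ m * ((x - η)⁻¹) ^ n = (x - η) ^ (m - n) := by
    have h2 : (x - η) ^ m = (x - η) ^ (m - n) * (x - η) ^ n := by
      rw [← pow_add, Nat.sub_add_cancel hmn]
    rw [h2, mul_assoc, ← mul_pow, mul_inv_cancel₀ hxη, one_pow, mul_one]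
  calc (x - η) ^ m * (((x - η)⁻¹) ^ n
        * ((x * (x - η)) ^ r * ∏ k ∈ F, (x * (x - η) - σ k ^ 2)))
      = ((x - η) ^ m * ((x - η)⁻¹) ^ n)
        * ((x * (x - η)) ^ r * ∏ k ∈ F, (x * (x - η) - σ k ^ 2)) := by ring
    _ = (x - η) ^ (m - n) * ((x * (x - η)) ^ r * ∏ k ∈ F, (x * (x - η) - σ k ^ 2)) := by
        rw [e1]
    _ = x ^ r * (x - η) ^ (m - n + r) * ∏ k ∈ F, (x * (x - η) - σ k ^ 2) := by
        rw [pow_add, mul_pow]; ring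
end

section
/- Let η > 0, let B ∈ ℝ^{m×n} be a nonzero matrix with m ≥ n, and let W = [[ηI, B], [Bᵀ, O]] be the (m+n)×(m+n) real symmetric block matrix where I is the m×m identity matrix and O is the n×n zero matrix. Let σ_1 = σ_max(B) be the largest singular value of B. Then λ_max(W) = ½(η + √(4σ_1² + η²)), λ_min(W) = ½(η − √(4σ_1² + η²)), and consequently ρ(W) = λ_max(W), i.e., W possesses the quasi-Perron-Frobenius property. -/
open Matrix

/-- The largest singular value of a real `m × n` matrix, i.e. the operator norm of the
associated linear map between Euclidean spaces. -/
noncomputable def sigmaMax {m n : ℕ} (B : Matrix (Fin m) (Fin n) ℝ) : ℝ :=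
  ‖LinearMap.toContinuousLinearMap (Matrix.toEuclideanLin B)‖






section Aux

variable {k : Type*} [Fintype k] [DecidableEq k]

lemma star_eq_transpose (U : Matrix k k ℝ) : star U = Uᵀ := by
  ext i j; simp [Matrix.star_apply]

lemma dot_self_nonneg (z : k → ℝ) : 0 ≤ z ⬝ᵥ z :=
  Finset.sum_nonneg fun i _ => mul_self_nonneg _

lemma dot_self_pos {z : k → ℝ} (hz : z ≠ 0) : 0 < z ⬝ᵥ z := by
  rcases (dot_self_nonneg z).lt_or_eq with h | h
  · exact h
  · exact absurd (dotProduct_self_eq_zero.mp h.symm) hz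

/-- If `M v = t v` with `v ≠ 0` then `t` is among the eigenvalues of `hM`. -/
lemma eig_mem {M : Matrix k k ℝ} (hM : M.IsHermitian)
    {v : k → ℝ} {t : ℝ} (hv : v ≠ 0) (hMv : M *ᵥ v = t • v) :
    ∃ i, hM.eigenvalues i = t := by
  set U : Matrix k k ℝ := (hM.eigenvectorUnitary : Matrix k k ℝ) with hU
  have hUU : U * star U = 1 := (Matrix.mem_unitaryGroup_iff).mp hM.eigenvectorUnitary.2
  have hUU' : star U * U = 1 := (Matrix.mem_unitaryGroup_iff').mp hM.eigenvectorUnitary.2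
  set u : k → ℝ := star U *ᵥ v with hu
  have hu0 : u ≠ 0 := by
    intro h
    apply hv
    have : U *ᵥ u = v := by
      rw [hu, mulVec_mulVec, hUU, one_mulVec]
    rw [h, mulVec_zero] at this
    exact this.symm
  have hdiag : diagonal (RCLike.ofReal ∘ hM.eigenvalues) *ᵥ u = t • u := by
    have hsp := hM.spectral_theorem
    have h1 : M *ᵥ v = U *ᵥ (diagonal (RCLike.ofReal ∘ hM.eigenvalues) *ᵥ u) := by
      conv_lhs => rw [hsp, Unitary.conjStarAlgAut_apply]
      rw [hu, mulVec_mulVec, mulVec_mulVec, Matrix.mul_assoc]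
    have h2 : star U *ᵥ (M *ᵥ v) = diagonal (RCLike.ofReal ∘ hM.eigenvalues) *ᵥ u := by
      rw [h1, mulVec_mulVec, hUU', one_mulVec]
    rw [← h2, hMv, mulVec_smul, hu]
  obtain ⟨i, hi⟩ := Function.ne_iff.mp hu0
  refine ⟨i, ?_⟩
  have := congrFun hdiag i
  simp only [mulVec_diagonal, Function.comp_apply, Pi.smul_apply, smul_eq_mul] at this
  have : (hM.eigenvalues i) * u i = t * u i := by simpa using this
  exact mul_right_cancel₀ hi this

/-- Rayleigh upper bound from eigenvalue upper bound. -/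
lemma rayleigh_le {M : Matrix k k ℝ} (hM : M.IsHermitian) {c : ℝ}
    (hc : ∀ i, hM.eigenvalues i ≤ c) (y : k → ℝ) :
    y ⬝ᵥ (M *ᵥ y) ≤ c * (y ⬝ᵥ y) := by
  set U : Matrix k k ℝ := (hM.eigenvectorUnitary : Matrix k k ℝ) with hU
  have hUU : U * star U = 1 := (Matrix.mem_unitaryGroup_iff).mp hM.eigenvectorUnitary.2
  set u : k → ℝ := star U *ᵥ y with hu
  have hvm : y ᵥ* U = u := by
    rw [hu, star_eq_transpose, ← vecMul_transpose, transpose_transpose]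
  have key : y ⬝ᵥ (M *ᵥ y) = u ⬝ᵥ (diagonal (RCLike.ofReal ∘ hM.eigenvalues) *ᵥ u) := by
    conv_lhs => rw [hM.spectral_theorem, Unitary.conjStarAlgAut_apply]
    rw [← mulVec_mulVec, ← mulVec_mulVec, dotProduct_mulVec y U, hvm]
  have huu : u ⬝ᵥ u = y ⬝ᵥ y := by
    rw [hu, star_eq_transpose]
    rw [show (Uᵀ *ᵥ y) ⬝ᵥ (Uᵀ *ᵥ y) = ((Uᵀ *ᵥ y) ᵥ* Uᵀ) ⬝ᵥ y from dotProduct_mulVec _ _ _,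
      vecMul_transpose, mulVec_mulVec, ← star_eq_transpose, hUU, one_mulVec]
  rw [key, ← huu]
  have : u ⬝ᵥ (diagonal (RCLike.ofReal ∘ hM.eigenvalues) *ᵥ u)
      = ∑ i, hM.eigenvalues i * (u i * u i) := by
    simp [dotProduct, mulVec_diagonal, mul_comm, mul_left_comm, mul_assoc]
  rw [this, dotProduct, Finset.mul_sum]
  exact Finset.sum_le_sum fun i _ =>
    mul_le_mul_of_nonneg_right (hc i) (mul_self_nonneg _)

end Aux

lemma norm_symm_sq {k : Type*} [Fintype k] (z : k → ℝ) :
    ‖(WithLp.equiv 2 (k → ℝ)).symm z‖ ^ 2 = z ⬝ᵥ z := by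
  rw [← real_inner_self_eq_norm_sq]
  simp only [WithLp.equiv_symm_apply, PiLp.inner_apply, RCLike.inner_apply, dotProduct, conj_trivial]

lemma toCLM_apply {m n : ℕ} (B : Matrix (Fin m) (Fin n) ℝ) (y : Fin n → ℝ) :
    (LinearMap.toContinuousLinearMap (Matrix.toEuclideanLin B))
      ((WithLp.equiv 2 (Fin n → ℝ)).symm y) = (WithLp.equiv 2 (Fin m → ℝ)).symm (B *ᵥ y) := by
  simp [LinearMap.coe_toContinuousLinearMap']

lemma mulVec_dot_le {m n : ℕ} (B : Matrix (Fin m) (Fin n) ℝ) (y : Fin n → ℝ) :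
    (B *ᵥ y) ⬝ᵥ (B *ᵥ y) ≤ sigmaMax B ^ 2 * (y ⬝ᵥ y) := by
  have h := (LinearMap.toContinuousLinearMap (Matrix.toEuclideanLin B)).le_opNorm
    ((WithLp.equiv 2 (Fin n → ℝ)).symm y)
  rw [toCLM_apply] at h
  have h2 : ‖(WithLp.equiv 2 (Fin m → ℝ)).symm (B *ᵥ y)‖ ^ 2
      ≤ (sigmaMax B * ‖(WithLp.equiv 2 (Fin n → ℝ)).symm y‖) ^ 2 :=
    pow_le_pow_left₀ (norm_nonneg _) h 2
  rw [norm_symm_sq, mul_pow, norm_symm_sq] at h2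
  exact h2

lemma sigmaMax_nonneg {m n : ℕ} (B : Matrix (Fin m) (Fin n) ℝ) : 0 ≤ sigmaMax B :=
  norm_nonneg _

lemma sigmaMax_pos {m n : ℕ} {B : Matrix (Fin m) (Fin n) ℝ} (hB : B ≠ 0) : 0 < sigmaMax B := by
  rcases (sigmaMax_nonneg B).lt_or_eq with h | h
  · exact h
  · exfalso
    apply hB
    have h0 : LinearMap.toContinuousLinearMap (Matrix.toEuclideanLin B) = 0 :=
      norm_eq_zero.mp h.symm
    have h1 : Matrix.toEuclideanLin B = 0 := by
      apply LinearMap.toContinuousLinearMap.injective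
      rw [h0, map_zero]
    have h2 : Matrix.toEuclideanLin B = Matrix.toEuclideanLin (0 : Matrix (Fin m) (Fin n) ℝ) := by
      rw [h1, map_zero]
    exact Matrix.toEuclideanLin.injective h2

lemma exists_top_singular {m n : ℕ} (B : Matrix (Fin m) (Fin n) ℝ) (hn : 0 < n)
    (hG : (Bᵀ * B).IsHermitian) :
    ∃ v : Fin n → ℝ, v ≠ 0 ∧ (Bᵀ * B) *ᵥ v = (sigmaMax B ^ 2) • v := by
  have : Nonempty (Fin n) := ⟨⟨0, hn⟩⟩
  obtain ⟨i0, hi0⟩ := Finite.exists_max hG.eigenvalues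
  set ν := hG.eigenvalues i0 with hν
  set v : Fin n → ℝ := ⇑(hG.eigenvectorBasis i0) with hv
  have hv0 : v ≠ 0 := fun h => hG.eigenvectorBasis.orthonormal.ne_zero i0 (by rw [← WithLp.ofLp_eq_zero]; exact h)
  have hGv : (Bᵀ * B) *ᵥ v = ν • v := hG.mulVec_eigenvectorBasis i0
  -- dot identity:  v ⬝ (G v) = (Bv)⬝(Bv)
  have hdot : ∀ y : Fin n → ℝ, y ⬝ᵥ ((Bᵀ * B) *ᵥ y) = (B *ᵥ y) ⬝ᵥ (B *ᵥ y) := by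
    intro y
    rw [← mulVec_mulVec, dotProduct_mulVec y Bᵀ, vecMul_transpose]
  have hvv : 0 < v ⬝ᵥ v := by
    rcases (Finset.sum_nonneg fun i _ => mul_self_nonneg (v i)).lt_or_eq with h | h
    · exact h
    · exact absurd (dotProduct_self_eq_zero.mp h.symm) hv0
  have hνσ : ν = sigmaMax B ^ 2 := by
    have hle : ν ≤ sigmaMax B ^ 2 := by
      have h1 : ν * (v ⬝ᵥ v) = (B *ᵥ v) ⬝ᵥ (B *ᵥ v) := by
        rw [← hdot, hGv, dotProduct_smul, smul_eq_mul]
      have h2 := mulVec_dot_le B v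
      rw [← h1] at h2
      exact le_of_mul_le_mul_right h2 hvv
    have hν0 : 0 ≤ ν := by
      have h1 : ν * (v ⬝ᵥ v) = (B *ᵥ v) ⬝ᵥ (B *ᵥ v) := by
        rw [← hdot, hGv, dotProduct_smul, smul_eq_mul]
      have hBv : 0 ≤ (B *ᵥ v) ⬝ᵥ (B *ᵥ v) := dot_self_nonneg _
      nlinarith [hBv, hvv, h1]
    have hge : sigmaMax B ^ 2 ≤ ν := by
      have hop : sigmaMax B ≤ Real.sqrt ν := by
        apply ContinuousLinearMap.opNorm_le_bound _ (Real.sqrt_nonneg ν)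
        intro y'
        set y : Fin n → ℝ := WithLp.equiv 2 (Fin n → ℝ) y' with hy
        have hy' : (WithLp.equiv 2 (Fin n → ℝ)).symm y = y' := rfl
        have h3 : (B *ᵥ y) ⬝ᵥ (B *ᵥ y) ≤ ν * (y ⬝ᵥ y) := by
          rw [← hdot]
          exact rayleigh_le hG (fun i => hi0 i) y
        have h4 : ‖(LinearMap.toContinuousLinearMap (Matrix.toEuclideanLin B)) y'‖ ^ 2
            ≤ (Real.sqrt ν * ‖y'‖) ^ 2 := by
          rw [← hy', toCLM_apply, norm_symm_sq, mul_pow, Real.sq_sqrt hν0]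
          calc (B *ᵥ y) ⬝ᵥ (B *ᵥ y) ≤ ν * (y ⬝ᵥ y) := h3
            _ = ν * ‖y'‖ ^ 2 := by rw [← hy', norm_symm_sq]
        have h5 : (0:ℝ) ≤ Real.sqrt ν * ‖y'‖ := mul_nonneg (Real.sqrt_nonneg _) (norm_nonneg _)
        nlinarith [norm_nonneg ((LinearMap.toContinuousLinearMap (Matrix.toEuclideanLin B)) y')]
      calc sigmaMax B ^ 2 ≤ Real.sqrt ν ^ 2 :=
            pow_le_pow_left₀ (sigmaMax_nonneg B) hop 2
        _ = ν := Real.sq_sqrt hν0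
    linarith
  exact ⟨v, hv0, by rw [hGv, hνσ]⟩

set_option maxHeartbeats 1000000 in
theorem stmt_11 (m n : ℕ) (hmn : n ≤ m)
    (η : ℝ) (hη : 0 < η)
    (B : Matrix (Fin m) (Fin n) ℝ) (hB : B ≠ 0)
    (hW : (fromBlocks (η • (1 : Matrix (Fin m) (Fin m) ℝ)) B Bᵀ
        (0 : Matrix (Fin n) (Fin n) ℝ)).IsHermitian) :
    maxEig hW = (η + Real.sqrt (4 * sigmaMax B ^ 2 + η ^ 2)) / 2 ∧
    minEig hW = (η - Real.sqrt (4 * sigmaMax B ^ 2 + η ^ 2)) / 2 ∧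
    specRad hW = maxEig hW := by
  classical
  have hσpos : 0 < sigmaMax B := sigmaMax_pos hB
  set σ := sigmaMax B with hσ
  have hnpos : 0 < n := by
    rcases Nat.eq_zero_or_pos n with h | h
    · exfalso; apply hB; subst h; ext i j; exact j.elim0
    · exact h
  have hne1 : Nonempty (Fin n) := ⟨⟨0, hnpos⟩⟩
  have hne2 : Nonempty (Fin m) := ⟨⟨0, lt_of_lt_of_le hnpos hmn⟩⟩
  have hNE : Nonempty (Fin m ⊕ Fin n) := ⟨Sum.inr ⟨0, hnpos⟩⟩
  set s := Real.sqrt (4 * σ ^ 2 + η ^ 2) with hs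
  have hs2 : s ^ 2 = 4 * σ ^ 2 + η ^ 2 := Real.sq_sqrt (by positivity)
  have hs0 : 0 ≤ s := Real.sqrt_nonneg _
  have hηs : η < s := by nlinarith
  set W := fromBlocks (η • (1 : Matrix (Fin m) (Fin m) ℝ)) B Bᵀ
      (0 : Matrix (Fin n) (Fin n) ℝ) with hWdef
  -- Step 1: all eigenvalues lie in [(η-s)/2, (η+s)/2]
  have hbound : ∀ i, (η - s)/2 ≤ hW.eigenvalues i ∧ hW.eigenvalues i ≤ (η + s)/2 := by
    intro i
    set lam := hW.eigenvalues i with hlam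
    set w : Fin m ⊕ Fin n → ℝ := ⇑(hW.eigenvectorBasis i) with hwdef
    have hw0 : w ≠ 0 := fun h => hW.eigenvectorBasis.orthonormal.ne_zero i (by rw [← WithLp.ofLp_eq_zero]; exact h)
    have heq : W *ᵥ w = lam • w := hW.mulVec_eigenvectorBasis i
    set x : Fin m → ℝ := w ∘ Sum.inl with hx
    set y : Fin n → ℝ := w ∘ Sum.inr with hy
    rw [hWdef, fromBlocks_mulVec] at heq
    have htop : η • x + B *ᵥ y = lam • x := by
      have h : (η • (1 : Matrix (Fin m) (Fin m) ℝ)) *ᵥ x + B *ᵥ y = lam • x :=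
        funext fun j => congrFun heq (Sum.inl j)
      rwa [smul_mulVec, one_mulVec] at h
    have hbot : Bᵀ *ᵥ x = lam • y := by
      have h : Bᵀ *ᵥ x + (0 : Matrix (Fin n) (Fin n) ℝ) *ᵥ y = lam • y :=
        funext fun j => congrFun heq (Sum.inr j)
      rwa [zero_mulVec, add_zero] at h
    by_cases hy0 : y = 0
    · have hx0 : x ≠ 0 := by
        intro hx0
        apply hw0
        funext j
        cases j with
        | inl a => exact congrFun hx0 a
        | inr b => exact congrFun hy0 b
      have hle1 : lam = η := by
        obtain ⟨j, hj⟩ := Function.ne_iff.mp hx0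
        have h := congrFun htop j
        rw [hy0, mulVec_zero] at h
        simp only [Pi.add_apply, Pi.smul_apply, smul_eq_mul, Pi.zero_apply, add_zero] at h
        exact (mul_right_cancel₀ hj h).symm
      constructor <;> rw [hle1] <;> nlinarith
    · have hyy : 0 < y ⬝ᵥ y := dot_self_pos hy0
      have hBy : B *ᵥ y = (lam - η) • x := by
        funext j
        have h := congrFun htop j
        simp only [Pi.add_apply, Pi.smul_apply, smul_eq_mul] at h ⊢
        nlinarith [h]
      have hGy : Bᵀ *ᵥ (B *ᵥ y) = (lam * (lam - η)) • y := by
        rw [hBy, mulVec_smul, hbot, smul_smul, mul_comm]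
      have hkey : (B *ᵥ y) ⬝ᵥ (B *ᵥ y) = (lam * (lam - η)) * (y ⬝ᵥ y) := by
        have h1 : y ⬝ᵥ (Bᵀ *ᵥ (B *ᵥ y)) = (B *ᵥ y) ⬝ᵥ (B *ᵥ y) := by
          rw [dotProduct_mulVec y Bᵀ, vecMul_transpose]
        rw [← h1, hGy, dotProduct_smul, smul_eq_mul]
      have h0 : 0 ≤ lam * (lam - η) := by
        have h2 := dot_self_nonneg (B *ᵥ y)
        rw [hkey] at h2
        nlinarith [hyy]
      have h1 : lam * (lam - η) ≤ σ ^ 2 := by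
        have h2 := mulVec_dot_le B y
        rw [hkey] at h2
        exact le_of_mul_le_mul_right h2 hyy
      constructor <;> nlinarith [hs0, hs2]
  -- Step 2: top singular vector gives eigenvectors for the extreme eigenvalues
  have hGH : (Bᵀ * B).IsHermitian := by
    rw [← conjTranspose_eq_transpose_of_trivial]
    exact isHermitian_conjTranspose_mul_self B
  obtain ⟨v, hv0, hGv⟩ := exists_top_singular B hnpos hGH
  set u : Fin m → ℝ := σ⁻¹ • (B *ᵥ v) with hu
  have hBv : B *ᵥ v = σ • u := by
    rw [hu, smul_smul, mul_inv_cancel₀ (ne_of_gt hσpos), one_smul]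
  have hBtu : Bᵀ *ᵥ u = σ • v := by
    rw [hu, mulVec_smul, mulVec_mulVec, hGv, smul_smul]
    congr 1
    rw [pow_two, ← mul_assoc, inv_mul_cancel₀ (ne_of_gt hσpos), one_mul]
  have hvec : ∀ lam : ℝ, lam ^ 2 = η * lam + σ ^ 2 → ∃ i, hW.eigenvalues i = lam := by
    intro lam hlam
    set w : Fin m ⊕ Fin n → ℝ := Sum.elim (lam • u) (σ • v) with hw
    have hw0 : w ≠ 0 := by
      intro h
      apply hv0
      funext j
      have h2 := congrFun h (Sum.inr j)
      simp only [hw, Sum.elim_inr, Pi.smul_apply, smul_eq_mul, Pi.zero_apply] at h2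
      rcases mul_eq_zero.mp h2 with h3 | h3
      · exact absurd h3 (ne_of_gt hσpos)
      · exact h3
    apply eig_mem hW hw0
    rw [hWdef, fromBlocks_mulVec]
    have hcomp1 : (η • (1 : Matrix (Fin m) (Fin m) ℝ)) *ᵥ (lam • u) + B *ᵥ (σ • v)
        = lam • (lam • u) := by
      rw [smul_mulVec, one_mulVec, mulVec_smul, hBv, smul_smul η lam, smul_smul σ σ,
        smul_smul lam lam, ← add_smul]
      congr 1
      nlinarith [hlam]
    have hcomp2 : Bᵀ *ᵥ (lam • u) + (0 : Matrix (Fin n) (Fin n) ℝ) *ᵥ (σ • v)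
        = lam • (σ • v) := by
      rw [zero_mulVec, add_zero, mulVec_smul, hBtu]
    have hc1 : w ∘ Sum.inl = lam • u := rfl
    have hc2 : w ∘ Sum.inr = σ • v := rfl
    rw [hc1, hc2, hcomp1, hcomp2]
    funext j
    cases j with
    | inl a => simp [hw]
    | inr b => simp [hw]
  have hlp : ((η + s)/2) ^ 2 = η * ((η + s)/2) + σ ^ 2 := by nlinarith [hs2]
  have hlm : ((η - s)/2) ^ 2 = η * ((η - s)/2) + σ ^ 2 := by nlinarith [hs2]
  obtain ⟨ip, hip⟩ := hvec _ hlp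
  obtain ⟨im, him⟩ := hvec _ hlm
  have hbddA : BddAbove (Set.range hW.eigenvalues) := (Set.finite_range _).bddAbove
  have hbddB : BddBelow (Set.range hW.eigenvalues) := (Set.finite_range _).bddBelow
  have hmax : maxEig hW = (η + s)/2 := by
    unfold maxEig
    exact le_antisymm (ciSup_le fun i => (hbound i).2) (hip ▸ le_ciSup hbddA ip)
  have hmin : minEig hW = (η - s)/2 := by
    unfold minEig
    exact le_antisymm (him ▸ ciInf_le hbddB im) (le_ciInf fun i => (hbound i).1)
  refine ⟨hmax, hmin, ?_⟩
  rw [hmax]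
  unfold specRad
  apply le_antisymm
  · apply ciSup_le
    intro i
    rw [abs_le]
    exact ⟨by nlinarith [(hbound i).1], (hbound i).2⟩
  · have habs : |hW.eigenvalues ip| = (η + s)/2 := by
      rw [hip]
      exact abs_of_nonneg (by nlinarith)
    exact habs ▸ le_ciSup (Set.finite_range fun i => |hW.eigenvalues i|).bddAbove ip
end

section
/- (Rusten–Winther) Let W = [[A, B], [Bᵀ, O]] be the (m+n)×(m+n) real symmetric block matrix where A ∈ ℝ^{m×m} is symmetric positive definite with eigenvalues λ_1(A) ≥ ... ≥ λ_m(A) > 0, B ∈ ℝ^{m×n} has full column rank with singular values σ_1(B) ≥ ... ≥ σ_n(B) > 0, and O is the n×n zero matrix. Then every eigenvalue of W lies in the union of the two intervals [½(λ_m(A) − √(λ_m(A)² + 4σ_1(B)²)), ½(λ_1(A) − √(λ_1(A)² + 4σ_n(B)²))] and [λ_m(A), ½(λ_1(A) + √(λ_1(A)² + 4σ_1(B)²))]. -/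
open Matrix

/-- The largest singular value of a real matrix `B`, given a proof that `Bᵀ * B`
is Hermitian: the square root of the largest eigenvalue of `Bᵀ * B`. -/
noncomputable def sigma1 {m n : ℕ} {B : Matrix (Fin m) (Fin n) ℝ}
    (h : (Bᵀ * B).IsHermitian) : ℝ :=
  Real.sqrt (⨆ k, h.eigenvalues k)

/-- The smallest singular value of a real matrix `B`, given a proof that `Bᵀ * B`
is Hermitian: the square root of the smallest eigenvalue of `Bᵀ * B`. -/
noncomputable def sigmaN {m n : ℕ} {B : Matrix (Fin m) (Fin n) ℝ}
    (h : (Bᵀ * B).IsHermitian) : ℝ :=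
  Real.sqrt (⨅ k, h.eigenvalues k)

private lemma dot_self_nonneg' {k : Type*} [Fintype k] (x : k → ℝ) : 0 ≤ x ⬝ᵥ x :=
  Finset.sum_nonneg fun _ _ => mul_self_nonneg _

/-- Cauchy–Schwarz for a symmetric PSD quadratic form. -/
private lemma cs_psd {k : Type*} [Fintype k] (M : Matrix k k ℝ) (hsym : Mᵀ = M)
    (hpsd : ∀ w : k → ℝ, 0 ≤ w ⬝ᵥ (M *ᵥ w)) (u v : k → ℝ) :
    (u ⬝ᵥ (M *ᵥ v)) ^ 2 ≤ (u ⬝ᵥ (M *ᵥ u)) * (v ⬝ᵥ (M *ᵥ v)) := by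
  have hvu : v ⬝ᵥ (M *ᵥ u) = u ⬝ᵥ (M *ᵥ v) := by
    rw [dotProduct_mulVec, ← hsym, vecMul_transpose, dotProduct_comm, hsym]
  have key : ∀ t : ℝ, 0 ≤ (v ⬝ᵥ (M *ᵥ v)) * (t * t) + (2 * (u ⬝ᵥ (M *ᵥ v))) * t
      + u ⬝ᵥ (M *ᵥ u) := by
    intro t
    have h := hpsd (u + t • v)
    simp only [mulVec_add, mulVec_smul, dotProduct_add, add_dotProduct, dotProduct_smul,
      smul_dotProduct, smul_eq_mul] at h
    rw [hvu] at h
    ring_nf at h ⊢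
    linarith
  have hd := discrim_le_zero key
  rw [discrim] at hd
  ring_nf at hd ⊢
  linarith

/-- Cauchy–Schwarz for the dot product. -/
private lemma cs_dot {k : Type*} [Fintype k] [DecidableEq k] (u v : k → ℝ) :
    (u ⬝ᵥ v) ^ 2 ≤ (u ⬝ᵥ u) * (v ⬝ᵥ v) := by
  have := cs_psd (1 : Matrix k k ℝ) transpose_one
    (fun w => by simpa [one_mulVec] using dot_self_nonneg' w) u v
  simpa [one_mulVec] using this

private lemma transpose_dot {m n : Type*} [Fintype m] [Fintype n]
    (B : Matrix m n ℝ) (u : m → ℝ) (v : n → ℝ) :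
    (Bᵀ *ᵥ u) ⬝ᵥ v = u ⬝ᵥ (B *ᵥ v) := by
  rw [mulVec_transpose, ← dotProduct_mulVec]

/-- Rayleigh quotient bounds for a real symmetric matrix. -/
private lemma rayleigh {k : Type*} [Fintype k] [DecidableEq k] {M : Matrix k k ℝ}
    (hM : M.IsHermitian) (x : k → ℝ) :
    (⨅ i, hM.eigenvalues i) * (x ⬝ᵥ x) ≤ x ⬝ᵥ (M *ᵥ x) ∧
      x ⬝ᵥ (M *ᵥ x) ≤ (⨆ i, hM.eigenvalues i) * (x ⬝ᵥ x) := by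
  classical
  cases isEmpty_or_nonempty k with
  | inl h =>
    simp [dotProduct, Finset.univ_eq_empty]
  | inr h =>
    set U : Matrix k k ℝ := (hM.eigenvectorUnitary : Matrix k k ℝ) with hU
    have hUU : U * star U = 1 := (Matrix.mem_unitaryGroup_iff).mp hM.eigenvectorUnitary.2
    have hstar : star U = Uᵀ := by
      rw [Matrix.star_eq_conjTranspose, conjTranspose_eq_transpose_of_trivial]
    set w : k → ℝ := Uᵀ *ᵥ x with hw
    have hdot : ∀ z : k → ℝ, x ⬝ᵥ (U *ᵥ z) = w ⬝ᵥ z := by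
      intro z
      rw [hw, mulVec_transpose, dotProduct_mulVec]
    have hxx : x ⬝ᵥ x = w ⬝ᵥ w := by
      have : U *ᵥ (Uᵀ *ᵥ x) = x := by
        rw [mulVec_mulVec, ← hstar, hUU, one_mulVec]
      calc x ⬝ᵥ x = x ⬝ᵥ (U *ᵥ (Uᵀ *ᵥ x)) := by rw [this]
        _ = w ⬝ᵥ w := hdot _
    have hq : x ⬝ᵥ (M *ᵥ x) = ∑ i, hM.eigenvalues i * (w i * w i) := by
      conv_lhs => rw [hM.spectral_theorem]
      rw [Unitary.conjStarAlgAut_apply, ← hU, hstar, ← mulVec_mulVec, ← mulVec_mulVec, hdot]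
      simp only [dotProduct]
      refine Finset.sum_congr rfl fun i _ => ?_
      rw [mulVec_diagonal]
      simp [Function.comp]
      ring
    have hbdd₁ : BddBelow (Set.range hM.eigenvalues) := Set.Finite.bddBelow (Set.finite_range _)
    have hbdd₂ : BddAbove (Set.range hM.eigenvalues) := Set.Finite.bddAbove (Set.finite_range _)
    constructor
    · rw [hq, hxx, dotProduct, Finset.mul_sum]
      refine Finset.sum_le_sum fun i _ => ?_
      exact mul_le_mul_of_nonneg_right (ciInf_le hbdd₁ i) (mul_self_nonneg _)
    · rw [hq, hxx, dotProduct, Finset.mul_sum]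
      refine Finset.sum_le_sum fun i _ => ?_
      exact mul_le_mul_of_nonneg_right (le_ciSup hbdd₂ i) (mul_self_nonneg _)

set_option maxHeartbeats 3000000 in
theorem stmt_12 (m n : ℕ)
    (A : Matrix (Fin m) (Fin m) ℝ) (B : Matrix (Fin m) (Fin n) ℝ)
    (hA : A.PosDef)
    (hrank : B.rank = n)
    (hBtB : (Bᵀ * B).IsHermitian)
    (hW : (fromBlocks A B Bᵀ (0 : Matrix (Fin n) (Fin n) ℝ)).IsHermitian) :
    ∀ i, hW.eigenvalues i ∈
      Set.Icc
        ((minEig hA.isHermitian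
          - Real.sqrt (minEig hA.isHermitian ^ 2 + 4 * sigma1 hBtB ^ 2)) / 2)
        ((maxEig hA.isHermitian
          - Real.sqrt (maxEig hA.isHermitian ^ 2 + 4 * sigmaN hBtB ^ 2)) / 2)
      ∪ Set.Icc (minEig hA.isHermitian)
        ((maxEig hA.isHermitian
          + Real.sqrt (maxEig hA.isHermitian ^ 2 + 4 * sigma1 hBtB ^ 2)) / 2) := by
  classical
  intro i
  -- injectivity of B from full column rank
  have hBinj : ∀ v : Fin n → ℝ, B *ᵥ v = 0 → v = 0 := by
    intro v hv
    have h1 : B.rank + Module.finrank ℝ (LinearMap.ker B.mulVecLin) = n := by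
      have := LinearMap.finrank_range_add_finrank_ker B.mulVecLin
      simpa [Matrix.rank, Module.finrank_pi] using this
    have hker : Module.finrank ℝ (LinearMap.ker B.mulVecLin) = 0 := by omega
    have : LinearMap.ker B.mulVecLin = ⊥ := Submodule.finrank_eq_zero.mp hker
    have hv' : v ∈ LinearMap.ker B.mulVecLin := by
      simpa [LinearMap.mem_ker, Matrix.mulVecLin_apply] using hv
    rw [this] at hv'
    simpa using hv'
  -- eigenvector of the block matrix
  set μ : ℝ := hW.eigenvalues i with hμdef
  set z : (Fin m ⊕ Fin n) → ℝ := ⇑(hW.eigenvectorBasis i) with hzdef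
  have heig : (fromBlocks A B Bᵀ (0 : Matrix (Fin n) (Fin n) ℝ)) *ᵥ z = μ • z :=
    hW.mulVec_eigenvectorBasis i
  have hznz : z ≠ 0 := by
    have h0 := hW.eigenvectorBasis.orthonormal.ne_zero i
    intro h
    apply h0
    ext j
    exact congrFun h j
  set x : Fin m → ℝ := fun j => z (Sum.inl j) with hxdef
  set y : Fin n → ℝ := fun j => z (Sum.inr j) with hydef
  have hz_elim : z = Sum.elim x y := by funext j; cases j <;> rfl
  have heig' : Sum.elim (A *ᵥ x + B *ᵥ y) (Bᵀ *ᵥ x + 0 *ᵥ y) = μ • z := by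
    rw [← heig, fromBlocks_mulVec]
    rfl
  have heq1 : A *ᵥ x + B *ᵥ y = μ • x := by
    funext j
    have := congrFun heig' (Sum.inl j)
    simpa using this
  have heq2 : Bᵀ *ᵥ x = μ • y := by
    funext j
    have := congrFun heig' (Sum.inr j)
    simpa using this
  -- scalar quantities
  set p : ℝ := x ⬝ᵥ x with hpdef
  set q : ℝ := y ⬝ᵥ y with hqdef
  set a : ℝ := x ⬝ᵥ (A *ᵥ x) with hadef
  have hp0 : 0 ≤ p := dot_self_nonneg' x
  have hq0 : 0 ≤ q := dot_self_nonneg' y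
  have hs : x ⬝ᵥ (B *ᵥ y) = μ * q := by
    rw [dotProduct_mulVec, ← mulVec_transpose, heq2]
    simp [smul_dotProduct, hqdef]
  have ha : a = μ * p - μ * q := by
    have := congrArg (fun v => x ⬝ᵥ v) heq1
    simp only [dotProduct_add, dotProduct_smul, smul_eq_mul] at this
    rw [hs] at this
    rw [hadef]
    linarith [this]
  -- eigenvalue bounds for A
  have hrayA := rayleigh hA.isHermitian x
  set lm : ℝ := minEig hA.isHermitian with hlmdef
  set lM : ℝ := maxEig hA.isHermitian with hlMdef
  have hAlow : lm * p ≤ a := hrayA.1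
  have hAhigh : a ≤ lM * p := hrayA.2
  -- eigenvalue bounds for BᵀB
  set s1 : ℝ := sigma1 hBtB with hs1def
  set sn : ℝ := sigmaN hBtB with hsndef
  have hBtB_psd : (Bᵀ * B).PosSemidef := by
    have := Matrix.posSemidef_conjTranspose_mul_self B
    rwa [conjTranspose_eq_transpose_of_trivial] at this
  have hiInf_nonneg : 0 ≤ ⨅ k, hBtB.eigenvalues k := by
    cases isEmpty_or_nonempty (Fin n) with
    | inl h => rw [Real.iInf_of_isEmpty]
    | inr h =>
      exact le_ciInf fun k => hBtB_psd.eigenvalues_nonneg k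
  have hiSup_nonneg : 0 ≤ ⨆ k, hBtB.eigenvalues k := by
    cases isEmpty_or_nonempty (Fin n) with
    | inl h => rw [Real.iSup_of_isEmpty]
    | inr h =>
      exact le_trans (hBtB_psd.eigenvalues_nonneg (Classical.arbitrary _))
        (le_ciSup (Set.Finite.bddAbove (Set.finite_range _)) _)
  have hs1sq : s1 ^ 2 = ⨆ k, hBtB.eigenvalues k := Real.sq_sqrt hiSup_nonneg
  have hsnsq : sn ^ 2 = ⨅ k, hBtB.eigenvalues k := Real.sq_sqrt hiInf_nonneg
  have hs1_0 : 0 ≤ s1 := Real.sqrt_nonneg _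
  have hsn_0 : 0 ≤ sn := Real.sqrt_nonneg _
  have hBtB_form : ∀ v : Fin n → ℝ, v ⬝ᵥ ((Bᵀ * B) *ᵥ v) = (B *ᵥ v) ⬝ᵥ (B *ᵥ v) := by
    intro v
    rw [← mulVec_mulVec, dotProduct_mulVec, vecMul_transpose]
  have hrayBtB : ∀ v : Fin n → ℝ,
      sn ^ 2 * (v ⬝ᵥ v) ≤ (B *ᵥ v) ⬝ᵥ (B *ᵥ v) ∧
        (B *ᵥ v) ⬝ᵥ (B *ᵥ v) ≤ s1 ^ 2 * (v ⬝ᵥ v) := by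
    intro v
    have := rayleigh hBtB v
    rw [hBtB_form v] at this
    rw [hs1sq, hsnsq]
    exact this
  -- bound on |Bᵀ x|²
  have hBtx_bound : (Bᵀ *ᵥ x) ⬝ᵥ (Bᵀ *ᵥ x) ≤ s1 ^ 2 * p := by
    set w : Fin n → ℝ := Bᵀ *ᵥ x with hwdef
    set t : ℝ := w ⬝ᵥ w with htdef
    have ht0 : 0 ≤ t := dot_self_nonneg' w
    have h1 : t = x ⬝ᵥ (B *ᵥ w) := transpose_dot B x w
    have h2 : (x ⬝ᵥ (B *ᵥ w)) ^ 2 ≤ p * (s1 ^ 2 * t) := by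
      calc (x ⬝ᵥ (B *ᵥ w)) ^ 2 ≤ p * ((B *ᵥ w) ⬝ᵥ (B *ᵥ w)) := cs_dot x (B *ᵥ w)
        _ ≤ p * (s1 ^ 2 * t) := by
            exact mul_le_mul_of_nonneg_left ((hrayBtB w).2) hp0
    rw [← h1] at h2
    rcases eq_or_lt_of_le ht0 with h | h
    · rw [← h]; positivity
    · nlinarith [h2, h]
  have hBtx_eq : (Bᵀ *ᵥ x) ⬝ᵥ (Bᵀ *ᵥ x) = μ ^ 2 * q := by
    rw [heq2]
    simp [smul_dotProduct, dotProduct_smul, hqdef]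
    ring
  -- key identity
  have hkey : μ ^ 2 * p = μ * a + μ ^ 2 * q := by rw [ha]; ring
  -- μ ≠ 0
  have hAform : ∀ v : Fin m → ℝ, v ≠ 0 → 0 < v ⬝ᵥ (A *ᵥ v) := by
    intro v hv
    have := hA.dotProduct_mulVec_pos hv
    simpa using this
  have hmu_ne : μ ≠ 0 := by
    intro h0
    have hax : a = 0 := by rw [ha, h0]; ring
    have hx0 : x = 0 := by
      by_contra hx
      exact absurd hax (ne_of_gt (hAform x hx))
    have hBy : B *ᵥ y = 0 := by
      have := heq1
      rw [hx0, h0] at this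
      simpa using this
    have hy0 : y = 0 := hBinj y hBy
    apply hznz
    rw [hz_elim, hx0, hy0]
    simp
  -- x ≠ 0
  have hx_ne : x ≠ 0 := by
    intro hx0
    have : (0 : Fin n → ℝ) = μ • y := by
      rw [← heq2, hx0]; simp
    have hy0 : y = 0 := by
      funext j
      have := congrFun this j
      simp at this
      rcases this with h | h
      · exact absurd h hmu_ne
      · rw [Pi.zero_apply]; linarith [h]
    apply hznz
    rw [hz_elim, hx0, hy0]; simp
  have hp_pos : 0 < p := by
    rcases eq_or_lt_of_le hp0 with h | h
    · exact absurd (dotProduct_self_eq_zero.mp h.symm) hx_ne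
    · exact h
  have ha_pos : 0 < a := hAform x hx_ne
  have hm : Nonempty (Fin m) := by
    by_contra h
    rw [not_nonempty_iff] at h
    exact hx_ne (funext fun j => (h.false j).elim)
  have hlm_pos : 0 < lm := by
    obtain ⟨j, hj⟩ := Finite.exists_min hA.isHermitian.eigenvalues
    have h1 : hA.isHermitian.eigenvalues j ≤ lm := le_ciInf hj
    exact lt_of_lt_of_le (hA.eigenvalues_pos j) h1
  have hlM_pos : 0 < lM := by
    have h1 : lm ≤ lM := by
      obtain ⟨j⟩ := hm
      exact le_trans (ciInf_le (Set.Finite.bddBelow (Set.finite_range _)) j)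
        (le_ciSup (Set.Finite.bddAbove (Set.finite_range _)) j)
    linarith
  have hrayAup : ∀ v : Fin m → ℝ, v ⬝ᵥ (A *ᵥ v) ≤ lM * (v ⬝ᵥ v) :=
    fun v => (rayleigh hA.isHermitian v).2
  have hApsd : ∀ v : Fin m → ℝ, 0 ≤ v ⬝ᵥ (A *ᵥ v) := by
    intro v
    have := hA.posSemidef.dotProduct_mulVec_nonneg v
    simpa using this
  clear_value p q a lm lM s1 sn
  clear_value x y
  clear_value z
  clear_value μ
  clear heig hznz heig' hz_elim hzdef hμdef hrayA hxdef hydef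
  rcases lt_or_gt_of_ne hmu_ne with hneg | hpos
  · -- μ < 0 : left interval
    left
    -- lower bound: μ² - lm μ ≤ s1²
    have hineq1 : μ ^ 2 - lm * μ ≤ s1 ^ 2 := by
      have h1 : μ * a ≤ μ * (lm * p) := by
        exact mul_le_mul_of_nonpos_left hAlow (le_of_lt hneg)
      have h2 : μ ^ 2 * p ≤ μ * (lm * p) + s1 ^ 2 * p := by
        rw [hkey]
        have := hBtx_bound
        rw [hBtx_eq] at this
        linarith
      nlinarith [h2, hp_pos]
    -- upper bound: sn² ≤ μ² - lM μ
    have hy_ne : y ≠ 0 := by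
      intro hy0
      have hq0' : q = 0 := by rw [hqdef, hy0]; simp
      have : a = μ * p := by rw [ha, hq0']; ring
      nlinarith [ha_pos, hp_pos, hneg, this]
    have hq_pos : 0 < q := by
      rcases eq_or_lt_of_le hq0 with h | h
      · rw [hqdef] at h
        exact absurd (dotProduct_self_eq_zero.mp h.symm) hy_ne
      · exact h
    have hBy_ne : B *ᵥ y ≠ 0 := fun h => hy_ne (hBinj y h)
    set v : Fin m → ℝ := B *ᵥ y with hvdef
    set r : ℝ := v ⬝ᵥ v with hrdef
    have hr_pos : 0 < r := by
      rcases eq_or_lt_of_le (dot_self_nonneg' v) with h | h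
      · exact absurd (dotProduct_self_eq_zero.mp h.symm) hBy_ne
      · exact h
    -- the matrix M = A - μ • 1
    set M : Matrix (Fin m) (Fin m) ℝ := A - μ • (1 : Matrix (Fin m) (Fin m) ℝ) with hMdef
    have hAsym : Aᵀ = A := by
      have := hA.isHermitian
      rwa [Matrix.IsHermitian, conjTranspose_eq_transpose_of_trivial] at this
    have hMsym : Mᵀ = M := by
      rw [hMdef, transpose_sub, transpose_smul, transpose_one, hAsym]
    have hMform : ∀ w : Fin m → ℝ, w ⬝ᵥ (M *ᵥ w) = w ⬝ᵥ (A *ᵥ w) - μ * (w ⬝ᵥ w) := by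
      intro w
      rw [hMdef, sub_mulVec, dotProduct_sub, smul_mulVec, one_mulVec,
        dotProduct_smul, smul_eq_mul]
    have hMpsd : ∀ w : Fin m → ℝ, 0 ≤ w ⬝ᵥ (M *ᵥ w) := by
      intro w
      rw [hMform]
      nlinarith [dot_self_nonneg' w, hneg, hApsd w]
    have hMx : M *ᵥ x = -v := by
      rw [hMdef, sub_mulVec, smul_mulVec, one_mulVec]
      have := heq1
      rw [hvdef]
      funext j
      have h := congrFun heq1 j
      simp only [Pi.add_apply, Pi.smul_apply, smul_eq_mul] at h
      simp only [Pi.sub_apply, Pi.smul_apply, Pi.neg_apply, smul_eq_mul]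
      linarith
    have hxMv : x ⬝ᵥ (M *ᵥ v) = -r := by
      rw [dotProduct_mulVec, ← hMsym, vecMul_transpose, hMx]
      rw [hrdef]
      simp [neg_dotProduct, dotProduct_comm]
    have hxMx : x ⬝ᵥ (M *ᵥ x) = -(μ * q) := by
      rw [hMform, ← hadef, ← hpdef, ha]; ring
    have hvMv : v ⬝ᵥ (M *ᵥ v) ≤ (lM - μ) * r := by
      rw [hMform, ← hrdef]
      have h2 := hrayAup v
      rw [← hrdef] at h2
      nlinarith [h2]
    have hcs := cs_psd M hMsym hMpsd x v
    rw [hxMv, hxMx] at hcs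
    -- r² ≤ (-(μ q)) * (v M v) ≤ (-μ q)(lM - μ) r
    have hr2 : r ^ 2 ≤ -(μ * q) * ((lM - μ) * r) := by
      calc r ^ 2 = (-r) ^ 2 := by ring
        _ ≤ -(μ * q) * (v ⬝ᵥ (M *ᵥ v)) := hcs
        _ ≤ -(μ * q) * ((lM - μ) * r) := by
            apply mul_le_mul_of_nonneg_left hvMv
            nlinarith [hneg, hq_pos]
    have hrle : r ≤ -(μ * q) * (lM - μ) := by nlinarith [hr2, hr_pos]
    have hsnr : sn ^ 2 * q ≤ r := by
      have h3 := (hrayBtB y).1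
      rw [← hqdef, ← hvdef, ← hrdef] at h3
      exact h3
    have hineq2 : sn ^ 2 ≤ μ ^ 2 - lM * μ := by nlinarith [hrle, hsnr, hq_pos]
    constructor
    · -- (lm - √(lm² + 4 s1²))/2 ≤ μ
      rw [div_le_iff₀ (by norm_num : (0:ℝ) < 2)]
      have hle : lm - 2 * μ ≤ Real.sqrt (lm ^ 2 + 4 * s1 ^ 2) := by
        rcases le_or_gt (lm - 2 * μ) 0 with h | h
        · linarith [Real.sqrt_nonneg (lm ^ 2 + 4 * s1 ^ 2)]
        · have h1 : (lm - 2 * μ) ^ 2 ≤ lm ^ 2 + 4 * s1 ^ 2 := by nlinarith [hineq1]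
          calc lm - 2 * μ = Real.sqrt ((lm - 2 * μ) ^ 2) := (Real.sqrt_sq h.le).symm
            _ ≤ _ := Real.sqrt_le_sqrt h1
      linarith
    · -- μ ≤ (lM - √(lM² + 4 sn²))/2
      rw [le_div_iff₀ (by norm_num : (0:ℝ) < 2)]
      have hle : Real.sqrt (lM ^ 2 + 4 * sn ^ 2) ≤ lM - 2 * μ := by
        have h1 : lM ^ 2 + 4 * sn ^ 2 ≤ (lM - 2 * μ) ^ 2 := by nlinarith [hineq2]
        calc Real.sqrt (lM ^ 2 + 4 * sn ^ 2) ≤ Real.sqrt ((lM - 2 * μ) ^ 2) :=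
              Real.sqrt_le_sqrt h1
          _ = |lM - 2 * μ| := Real.sqrt_sq_eq_abs _
          _ = lM - 2 * μ := abs_of_nonneg (by linarith [hlM_pos, hneg])
      linarith
  · -- μ > 0 : right interval
    right
    have hmulow : lm ≤ μ := by
      have h1 : lm * p ≤ μ * p := by
        calc lm * p ≤ a := hAlow
          _ = μ * p - μ * q := ha
          _ ≤ μ * p := by nlinarith [hpos, hq0]
      exact le_of_mul_le_mul_right (by linarith) hp_pos
    have hineq3 : μ ^ 2 ≤ lM * μ + s1 ^ 2 := by
      have h1 : μ * a ≤ μ * (lM * p) := mul_le_mul_of_nonneg_left hAhigh (le_of_lt hpos)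
      have h2 : μ ^ 2 * p ≤ μ * (lM * p) + s1 ^ 2 * p := by
        rw [hkey]
        have := hBtx_bound
        rw [hBtx_eq] at this
        linarith
      nlinarith [h2, hp_pos]
    constructor
    · exact hmulow
    · rw [le_div_iff₀ (by norm_num : (0:ℝ) < 2)]
      have hS0 : 0 ≤ Real.sqrt (lM ^ 2 + 4 * s1 ^ 2) := Real.sqrt_nonneg _
      have hS2 : Real.sqrt (lM ^ 2 + 4 * s1 ^ 2) ^ 2 = lM ^ 2 + 4 * s1 ^ 2 :=
        Real.sq_sqrt (by positivity)
      nlinarith [hS0, hS2, hineq3]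
end

section
/- (Perron) Let M ∈ ℝ^{n×n} be a matrix all of whose entries are positive. Then: (a) the spectral radius ρ(M) is positive; (b) ρ(M) is an eigenvalue of M of algebraic multiplicity one; (c) there is a unique vector x = (x_1, ..., x_n)ᵀ ∈ ℝ^n with Mx = ρ(M)x and x_1 + ... + x_n = 1, and this vector has all entries positive; (d) |λ| < ρ(M) for every (complex) eigenvalue λ of M with λ ≠ ρ(M). -/
open Matrix Finset Polynomial
set_option maxHeartbeats 2000000
set_option synthInstance.maxHeartbeats 200000

lemma perron_exists {n : ℕ} (hn : 0 < n) (M : Matrix (Fin n) (Fin n) ℝ)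
    (hM : ∀ i j, 0 < M i j) :
    ∃ (u : Fin n → ℝ) (r : ℝ), (∀ i, 0 < u i) ∧ (∑ i, u i = 1) ∧ 0 < r ∧ M *ᵥ u = r • u := by
  have hne : (Finset.univ : Finset (Fin n)).Nonempty := univ_nonempty_iff.2 (Fin.pos_iff_nonempty.mp hn)
  have hfin : Nonempty (Fin n) := Fin.pos_iff_nonempty.mp hn
  have hne2 : (Finset.univ : Finset (Fin n × Fin n)).Nonempty := univ_nonempty
  set a : ℝ := Finset.univ.inf' hne2 (fun p : Fin n × Fin n => M p.1 p.2) with ha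
  set b : ℝ := Finset.univ.sup' hne2 (fun p : Fin n × Fin n => M p.1 p.2) with hb
  have ha_le : ∀ i j, a ≤ M i j := fun i j => inf'_le _ (mem_univ (i, j))
  have hb_ge : ∀ i j, M i j ≤ b := fun i j => le_sup' (fun p : Fin n × Fin n => M p.1 p.2) (mem_univ (i, j))
  have ha_pos : 0 < a := by
    obtain ⟨p, -, hp⟩ := exists_mem_eq_inf' hne2 (fun p : Fin n × Fin n => M p.1 p.2)
    rw [ha, hp]; exact hM p.1 p.2
  have hab : a ≤ b := by
    obtain ⟨i0⟩ := hfin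
    exact le_trans (ha_le i0 i0) (hb_ge i0 i0)
  have hb_pos : 0 < b := lt_of_lt_of_le ha_pos hab
  have hn' : (0:ℝ) < n := by exact_mod_cast hn
  set δ : ℝ := a / (n * b) with hδ
  have hδ_pos : 0 < δ := div_pos ha_pos (mul_pos hn' hb_pos)
  have hδ_le : δ ≤ 1 / n := by
    rw [hδ, div_le_div_iff₀ (mul_pos hn' hb_pos) hn']
    calc a * n ≤ b * n := by nlinarith
    _ = 1 * (n * b) := by ring
  set R : ℝ := b / δ with hR
  set C : Set ((Fin n → ℝ) × ℝ) := {p | (∀ i, δ ≤ p.1 i) ∧ (∑ i, p.1 i = 1) ∧ 0 ≤ p.2 ∧ p.2 ≤ R ∧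
      ∀ i, p.2 * p.1 i ≤ (M *ᵥ p.1) i} with hC
  -- C is compact
  have hsum_mem : ∀ x : Fin n → ℝ, (∀ i, δ ≤ x i) → (∑ i, x i = 1) → ∀ i, x i ≤ 1 := by
    intro x h1 h2 i
    have : ∑ j ∈ univ.erase i, x j ≥ 0 := Finset.sum_nonneg fun j _ => le_trans hδ_pos.le (h1 j)
    have := Finset.add_sum_erase univ x (mem_univ i)
    linarith
  have hCsub : C ⊆ (Set.univ.pi fun _ : Fin n => Set.Icc (0:ℝ) 1) ×ˢ Set.Icc 0 R := by
    rintro ⟨x, t⟩ ⟨h1, h2, h3, h4, -⟩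
    exact ⟨fun i _ => ⟨le_trans hδ_pos.le (h1 i), hsum_mem x h1 h2 i⟩, h3, h4⟩
  have hCclosed : IsClosed C := by
    have c1 : IsClosed {p : (Fin n → ℝ) × ℝ | ∀ i, δ ≤ p.1 i} := by
      rw [Set.setOf_forall]
      exact isClosed_iInter fun i => isClosed_le continuous_const ((continuous_apply i).comp continuous_fst)
    have c2 : IsClosed {p : (Fin n → ℝ) × ℝ | ∑ i, p.1 i = 1} :=
      isClosed_eq (continuous_finset_sum _ fun i _ => (continuous_apply i).comp continuous_fst)
        continuous_const
    have c3 : IsClosed {p : (Fin n → ℝ) × ℝ | 0 ≤ p.2} := isClosed_le continuous_const continuous_snd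
    have c4 : IsClosed {p : (Fin n → ℝ) × ℝ | p.2 ≤ R} := isClosed_le continuous_snd continuous_const
    have c5 : IsClosed {p : (Fin n → ℝ) × ℝ | ∀ i, p.2 * p.1 i ≤ (M *ᵥ p.1) i} := by
      rw [Set.setOf_forall]
      refine isClosed_iInter fun i => isClosed_le
        (continuous_snd.mul ((continuous_apply i).comp continuous_fst)) ?_
      have : (fun p : (Fin n → ℝ) × ℝ => (M *ᵥ p.1) i) = fun p => ∑ j, M i j * p.1 j := by
        funext p; simp [Matrix.mulVec, dotProduct]
      rw [this]
      exact continuous_finset_sum _ fun j _ => continuous_const.mul ((continuous_apply j).comp continuous_fst)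
    have : C = ({p : (Fin n → ℝ) × ℝ | ∀ i, δ ≤ p.1 i} ∩ {p | ∑ i, p.1 i = 1}) ∩
        ({p | 0 ≤ p.2} ∩ ({p | p.2 ≤ R} ∩ {p | ∀ i, p.2 * p.1 i ≤ (M *ᵥ p.1) i})) := by
      ext p; simp only [hC, Set.mem_setOf_eq, Set.mem_inter_iff]; tauto
    rw [this]
    exact (c1.inter c2).inter (c3.inter (c4.inter c5))
  have hCcompact : IsCompact C :=
    IsCompact.of_isClosed_subset
      ((isCompact_univ_pi fun _ => isCompact_Icc).prod isCompact_Icc) hCclosed hCsub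
  have entry : ∀ (z : Fin n → ℝ) i, (M *ᵥ z) i = ∑ j, M i j * z j := fun z i => rfl
  have hδ1 : δ ≤ 1 := le_trans hδ_le (by rw [div_le_one hn']; exact_mod_cast hn)
  have hp0 : ((fun _ => 1/n, a) : (Fin n → ℝ) × ℝ) ∈ C := by
    refine ⟨fun i => hδ_le, ?_, ha_pos.le, ?_, ?_⟩
    · simp [Finset.sum_const, Finset.card_univ]
      field_simp
    · rw [hR, le_div_iff₀ hδ_pos]; nlinarith
    · intro i
      rw [entry]
      have h1 : a ≤ ∑ j, M i j := by
        have hn1 : (1:ℝ) ≤ n := by exact_mod_cast hn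
        calc a = (1:ℝ) * a := (one_mul a).symm
        _ ≤ (n:ℝ) * a := by nlinarith
        _ ≤ ∑ j, M i j := by
            have : ∑ j : Fin n, a ≤ ∑ j, M i j := Finset.sum_le_sum fun j _ => ha_le i j
            simpa using this
      have : ∑ j, M i j * (1/(n:ℝ)) = (∑ j, M i j) * (1/n) := by rw [← Finset.sum_mul]
      rw [this]
      have h1n : (0:ℝ) < 1/n := by positivity
      nlinarith
  obtain ⟨⟨x, r⟩, hmem, hmax⟩ := hCcompact.exists_isMaxOn ⟨_, hp0⟩ continuous_snd.continuousOn
  obtain ⟨hx1, hx2, hr0, hrR, hineq⟩ := hmem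
  simp only at hx1 hx2 hr0 hrR hineq
  have har : a ≤ r := hmax hp0
  have hxpos : ∀ i, 0 < x i := fun i => lt_of_lt_of_le hδ_pos (hx1 i)
  have hx01 : ∀ i, x i ≤ 1 := hsum_mem x hx1 hx2
  refine ⟨x, r, hxpos, hx2, lt_of_lt_of_le ha_pos har, ?_⟩
  by_contra h
  set w : Fin n → ℝ := M *ᵥ x - r • x with hw
  have hw0 : ∀ i, 0 ≤ w i := fun i => by
    simp only [hw, Pi.sub_apply, Pi.smul_apply, smul_eq_mul, sub_nonneg]
    exact hineq i
  have hwne : ∃ j0, 0 < w j0 := by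
    by_contra hc
    push_neg at hc
    apply h
    have : w = 0 := funext fun i => le_antisymm (hc i) (hw0 i)
    have := congrFun this
    funext i
    have hi := this i
    simp only [hw, Pi.sub_apply, Pi.zero_apply, sub_eq_zero] at hi
    exact hi
  obtain ⟨j0, hj0⟩ := hwne
  have hMw : ∀ i, 0 < (M *ᵥ w) i := by
    intro i
    rw [entry]
    exact Finset.sum_pos' (fun j _ => mul_nonneg (hM i j).le (hw0 j))
      ⟨j0, mem_univ _, mul_pos (hM i j0) hj0⟩
  have hMx_lb : ∀ i, a ≤ (M *ᵥ x) i := by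
    intro i
    rw [entry]
    calc a = a * ∑ j, x j := by rw [hx2, mul_one]
    _ = ∑ j, a * x j := by rw [Finset.mul_sum]
    _ ≤ ∑ j, M i j * x j := Finset.sum_le_sum fun j _ => by nlinarith [hxpos j, ha_le i j]
  have hMx_ub : ∀ i, (M *ᵥ x) i ≤ b := by
    intro i
    rw [entry]
    calc ∑ j, M i j * x j ≤ ∑ j, b * x j :=
      Finset.sum_le_sum fun j _ => by nlinarith [hxpos j, hb_ge i j]
    _ = b * ∑ j, x j := by rw [Finset.mul_sum]
    _ = b := by rw [hx2, mul_one]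
  set s : ℝ := ∑ i, (M *ᵥ x) i with hs
  have hs_lb : (n:ℝ) * a ≤ s := by
    have : ∑ i : Fin n, a ≤ s := Finset.sum_le_sum fun i _ => hMx_lb i
    simpa using this
  have hs_ub : s ≤ (n:ℝ) * b := by
    have : s ≤ ∑ i : Fin n, b := Finset.sum_le_sum fun i _ => hMx_ub i
    simpa using this
  have hs_pos : 0 < s := lt_of_lt_of_le (by positivity) hs_lb
  set y : Fin n → ℝ := s⁻¹ • (M *ᵥ x) with hy
  have hy_entry : ∀ i, y i = s⁻¹ * (M *ᵥ x) i := fun i => rfl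
  have hyK1 : ∀ i, δ ≤ y i := by
    intro i
    have h1 := hMx_lb i
    have h2 := hMx_ub i
    rw [hy_entry, hδ, inv_mul_eq_div, div_le_div_iff₀ (mul_pos hn' hb_pos) hs_pos]
    nlinarith [mul_pos hn' hb_pos]
  have hyK2 : ∑ i, y i = 1 := by
    simp only [hy_entry, ← Finset.mul_sum, ← hs]
    field_simp
  have hy01 : ∀ i, y i ≤ 1 := hsum_mem y hyK1 hyK2
  have hMy : M *ᵥ y - r • y = s⁻¹ • (M *ᵥ w) := by
    rw [hy, hw, Matrix.mulVec_smul, Matrix.mulVec_sub, Matrix.mulVec_smul]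
    ext i
    simp [smul_sub]
    ring
  set γ : ℝ := s⁻¹ * (univ.inf' hne fun i => (M *ᵥ w) i) with hγ
  have hγ_pos : 0 < γ := by
    apply mul_pos (by positivity)
    obtain ⟨i, -, hi⟩ := exists_mem_eq_inf' hne (fun i => (M *ᵥ w) i)
    rw [hi]; exact hMw i
  have hkey : ∀ i, (r + γ) * y i ≤ (M *ᵥ y) i := by
    intro i
    have h1 : (M *ᵥ y) i - r * y i = s⁻¹ * (M *ᵥ w) i := by
      have := congrFun hMy i
      simpa using this
    have h2 : γ ≤ s⁻¹ * (M *ᵥ w) i := by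
      have : (univ.inf' hne fun i => (M *ᵥ w) i) ≤ (M *ᵥ w) i :=
        inf'_le (fun i => (M *ᵥ w) i) (mem_univ i)
      have hsi : (0:ℝ) ≤ s⁻¹ := by positivity
      rw [hγ]; nlinarith
    have h3 := hy01 i
    have h4 : δ ≤ y i := hyK1 i
    nlinarith
  have hMy_ub : ∀ i, (M *ᵥ y) i ≤ b := by
    intro i
    rw [entry]
    calc ∑ j, M i j * y j ≤ ∑ j, b * y j :=
      Finset.sum_le_sum fun j _ => by nlinarith [hyK1 j, hb_ge i j, hδ_pos]
    _ = b * ∑ j, y j := by rw [Finset.mul_sum]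
    _ = b := by rw [hyK2, mul_one]
  have htR : r + γ ≤ R := by
    obtain ⟨i0⟩ := hfin
    have h1 := hkey i0
    have h2 := hMy_ub i0
    have h3 := hyK1 i0
    rw [hR, le_div_iff₀ hδ_pos]
    nlinarith [hγ_pos, hr0]
  have hmem2 : ((y, r + γ) : (Fin n → ℝ) × ℝ) ∈ C :=
    ⟨hyK1, hyK2, by positivity, htR, hkey⟩
  have hle : r + γ ≤ r := hmax hmem2
  linarith

lemma mulVec_entry {n : ℕ} (M : Matrix (Fin n) (Fin n) ℝ) (z : Fin n → ℝ) (i : Fin n) :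
    (M *ᵥ z) i = ∑ j, M i j * z j := rfl

lemma eig_nonneg_pos {n : ℕ} (M : Matrix (Fin n) (Fin n) ℝ) (hM : ∀ i j, 0 < M i j)
    {r : ℝ} (hr : 0 < r) {x : Fin n → ℝ} (hx : M *ᵥ x = r • x)
    (h0 : ∀ i, 0 ≤ x i) (hne : x ≠ 0) : ∀ i, 0 < x i := by
  obtain ⟨j0, hj0⟩ : ∃ j0, 0 < x j0 := by
    by_contra hc
    push_neg at hc
    exact hne (funext fun i => le_antisymm (hc i) (h0 i))
  intro i
  have h1 : 0 < (M *ᵥ x) i := by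
    rw [mulVec_entry]
    exact Finset.sum_pos' (fun j _ => mul_nonneg (hM i j).le (h0 j))
      ⟨j0, mem_univ _, mul_pos (hM i j0) hj0⟩
  have h2 : (M *ᵥ x) i = r * x i := by rw [hx]; rfl
  nlinarith
lemma eig_mult {n : ℕ} (hn : 0 < n) (M : Matrix (Fin n) (Fin n) ℝ) (hM : ∀ i j, 0 < M i j)
    {u : Fin n → ℝ} {r : ℝ} (hu : ∀ i, 0 < u i) (hr : 0 < r) (huu : M *ᵥ u = r • u)
    {x : Fin n → ℝ} (hx : M *ᵥ x = r • x) : ∃ t : ℝ, x = t • u := by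
  have hfin : Nonempty (Fin n) := Fin.pos_iff_nonempty.mp hn
  have hne : (Finset.univ : Finset (Fin n)).Nonempty := univ_nonempty
  set t : ℝ := univ.inf' hne (fun i => x i / u i) with ht
  obtain ⟨i0, -, hi0⟩ := exists_mem_eq_inf' hne (fun i => x i / u i)
  refine ⟨t, ?_⟩
  set y : Fin n → ℝ := x - t • u with hy
  have hy0 : ∀ i, 0 ≤ y i := by
    intro i
    have h1 : t ≤ x i / u i := inf'_le _ (mem_univ i)
    have h2 : t * u i ≤ x i := by
      rw [div_eq_mul_inv] at h1
      have h3 := mul_le_mul_of_nonneg_right h1 (hu i).le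
      rwa [inv_mul_cancel_right₀ (hu i).ne'] at h3
    simp only [hy, Pi.sub_apply, Pi.smul_apply, smul_eq_mul]
    linarith
  have hyi0 : y i0 = 0 := by
    simp only [hy, Pi.sub_apply, Pi.smul_apply, smul_eq_mul]
    rw [ht, hi0, div_mul_cancel₀]
    · ring
    · exact (hu i0).ne'
  have hyeig : M *ᵥ y = r • y := by
    rw [hy, Matrix.mulVec_sub, Matrix.mulVec_smul, hx, huu, smul_sub, smul_smul, smul_smul,
      mul_comm]
  have : y = 0 := by
    by_contra hc
    have hpos := eig_nonneg_pos M hM hr hyeig hy0 hc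
    exact absurd hyi0 (hpos i0).ne'
  rw [hy] at this
  have := sub_eq_zero.mp this
  rw [this]

lemma ofReal_mulVec {n : ℕ} (M : Matrix (Fin n) (Fin n) ℝ) (g : Fin n → ℝ) :
    (M.map Complex.ofReal) *ᵥ (fun i => (g i : ℂ)) = fun i => ((M *ᵥ g) i : ℂ) := by
  funext i
  simp only [Matrix.mulVec, dotProduct, Matrix.map_apply]
  push_cast
  rfl

lemma spec_iff {n : ℕ} (A : Matrix (Fin n) (Fin n) ℂ) (μ : ℂ) :
    μ ∈ spectrum ℂ A ↔ ∃ z, z ≠ 0 ∧ A *ᵥ z = μ • z := by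
  rw [spectrum.mem_iff, Algebra.algebraMap_eq_smul_one, Matrix.isUnit_iff_isUnit_det,
    isUnit_iff_ne_zero, not_not, ← Matrix.exists_mulVec_eq_zero_iff]
  constructor
  · rintro ⟨z, hz0, hz⟩
    rw [Matrix.sub_mulVec, Matrix.smul_mulVec, Matrix.one_mulVec, sub_eq_zero] at hz
    exact ⟨z, hz0, hz.symm⟩
  · rintro ⟨z, hz0, hz⟩
    refine ⟨z, hz0, ?_⟩
    rw [Matrix.sub_mulVec, Matrix.smul_mulVec, Matrix.one_mulVec, sub_eq_zero, hz]

lemma charpoly_eval {m : Type*} [Fintype m] [DecidableEq m] (B : Matrix m m ℂ) (t : ℂ) :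
    B.charpoly.eval t = (t • (1 : Matrix m m ℂ) - B).det := by
  rw [Matrix.charpoly]
  have h := RingHom.map_det (Polynomial.evalRingHom t) (Matrix.charmatrix B)
  simp only [Polynomial.coe_evalRingHom] at h
  rw [h]
  congr 1
  ext i j
  by_cases hij : i = j
  · subst hij
    simp [Matrix.charmatrix_apply_eq, Matrix.one_apply_eq]
  · simp [Matrix.charmatrix_apply_ne _ _ _ hij, Matrix.one_apply_ne hij]



lemma pairing {n : ℕ} (M : Matrix (Fin n) (Fin n) ℝ) {v : Fin n → ℝ} {r : ℝ}
    (hvv : Mᵀ *ᵥ v = r • v) (w : Fin n → ℝ) :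
    ∑ i, v i * (M *ᵥ w) i = r * ∑ i, v i * w i := by
  have h1 : ∀ j, ∑ i, M i j * v i = r * v j := by
    intro j
    have := congrFun hvv j
    rw [mulVec_entry] at this
    simp only [Matrix.transpose_apply, Pi.smul_apply, smul_eq_mul] at this
    exact this
  calc ∑ i, v i * (M *ᵥ w) i = ∑ i, ∑ j, v i * (M i j * w j) := by
        simp only [mulVec_entry, Finset.mul_sum]
  _ = ∑ j, ∑ i, v i * (M i j * w j) := Finset.sum_comm
  _ = ∑ j, (∑ i, M i j * v i) * w j := by
        refine Finset.sum_congr rfl fun j _ => ?_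
        rw [Finset.sum_mul]
        exact Finset.sum_congr rfl fun i _ => by ring
  _ = ∑ j, (r * v j) * w j := by simp only [h1]
  _ = r * ∑ i, v i * w i := by rw [Finset.mul_sum]; exact Finset.sum_congr rfl fun i _ => by ring



lemma cw {n : ℕ} (hn : 0 < n) (M : Matrix (Fin n) (Fin n) ℝ) (hM : ∀ i j, 0 < M i j)
    {v : Fin n → ℝ} {r : ℝ} (hv : ∀ i, 0 < v i) (hr : 0 < r) (hvv : Mᵀ *ᵥ v = r • v)
    {μ : ℂ} {z : Fin n → ℂ} (hz : z ≠ 0) (hzz : (M.map Complex.ofReal) *ᵥ z = μ • z) :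
    ‖μ‖ ≤ r ∧ (‖μ‖ = r → μ = (r : ℂ)) := by
  have hfin : Nonempty (Fin n) := Fin.pos_iff_nonempty.mp hn
  set m : Fin n → ℝ := fun i => ‖z i‖ with hm
  have hm0 : ∀ i, 0 ≤ m i := fun i => norm_nonneg _
  obtain ⟨j1, hj1⟩ : ∃ j, 0 < m j := by
    obtain ⟨j, hj⟩ := Function.ne_iff.mp hz
    exact ⟨j, by simpa [hm] using norm_pos_iff.mpr hj⟩
  have hrow : ∀ i, ∑ j, ((M i j : ℂ)) * z j = μ * z i := by
    intro i
    have := congrFun hzz i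
    simpa [Matrix.mulVec, dotProduct, Matrix.map_apply] using this
  have htri : ∀ i, ‖μ‖ * m i ≤ (M *ᵥ m) i := by
    intro i
    have h1 : ‖μ‖ * m i = ‖(∑ j, ((M i j : ℂ)) * z j)‖ := by
      rw [hrow i, norm_mul]
    rw [h1, mulVec_entry]
    refine le_trans (norm_sum_le _ _) (le_of_eq ?_)
    refine Finset.sum_congr rfl fun j _ => ?_
    rw [norm_mul, Complex.norm_real, Real.norm_eq_abs, abs_of_pos (hM i j)]
  have hsumpos : 0 < ∑ i, v i * m i :=
    Finset.sum_pos' (fun i _ => mul_nonneg (hv i).le (hm0 i))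
      ⟨j1, mem_univ _, mul_pos (hv j1) hj1⟩
  have hbound : ‖μ‖ ≤ r := by
    have h2 : ∑ i, v i * (‖μ‖ * m i) ≤ ∑ i, v i * (M *ᵥ m) i :=
      Finset.sum_le_sum fun i _ => mul_le_mul_of_nonneg_left (htri i) (hv i).le
    rw [pairing M hvv m] at h2
    have h3 : ∑ i, v i * (‖μ‖ * m i) = ‖μ‖ * ∑ i, v i * m i := by
      rw [Finset.mul_sum]
      exact Finset.sum_congr rfl fun i _ => by ring
    rw [h3] at h2
    exact le_of_mul_le_mul_right (by linarith [h2]) hsumpos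
  refine ⟨hbound, fun habs => ?_⟩
  -- equality case
  have hMm : M *ᵥ m = r • m := by
    have hdiff0 : ∀ i, 0 ≤ (M *ᵥ m) i - r * m i := fun i => by
      have := htri i; rw [habs] at this; linarith
    have hsum0 : ∑ i, v i * ((M *ᵥ m) i - r * m i) = 0 := by
      have : ∑ i, v i * ((M *ᵥ m) i - r * m i)
          = ∑ i, v i * (M *ᵥ m) i - r * ∑ i, v i * m i := by
        rw [Finset.mul_sum, ← Finset.sum_sub_distrib]
        exact Finset.sum_congr rfl fun i _ => by ring
      rw [this, pairing M hvv m, sub_self]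
    have hzero := (Finset.sum_eq_zero_iff_of_nonneg
      (fun i _ => mul_nonneg (hv i).le (hdiff0 i))).mp hsum0
    funext i
    have := hzero i (mem_univ i)
    have h4 : (M *ᵥ m) i - r * m i = 0 := by
      rcases mul_eq_zero.mp this with h | h
      · exact absurd h (hv i).ne'
      · exact h
    simp only [Pi.smul_apply, smul_eq_mul]
    linarith
  have hmpos : ∀ i, 0 < m i := eig_nonneg_pos M hM hr hMm hm0 (by
    intro hc; rw [hc] at hj1; simpa using hj1)
  obtain ⟨i0⟩ := hfin
  set S : ℂ := μ * z i0 with hS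
  have habsS : ‖S‖ = r * m i0 := by
    rw [hS, norm_mul, habs]
  have hSpos : 0 < ‖S‖ := by rw [habsS]; exact mul_pos hr (hmpos i0)
  set c : ℂ := S / (‖S‖ : ℂ) with hc
  have hcabs : ‖c‖ = 1 := by
    rw [hc, norm_div, Complex.norm_real, norm_norm, div_self hSpos.ne']
  have hcne : c ≠ 0 := fun h => by simp [h] at hcabs
  have hconjS : (starRingEnd ℂ) c * S = ((‖S‖ : ℝ) : ℂ) := by
    rw [hc, map_div₀, Complex.conj_ofReal, div_mul_eq_mul_div, mul_comm, Complex.mul_conj]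
    rw [Complex.normSq_eq_norm_sq]
    rw [div_eq_iff (by exact_mod_cast hSpos.ne')]
    push_cast
    ring
  -- per-term real parts
  have hre_eq : ∀ j, ((starRingEnd ℂ) c * z j).re = m j := by
    have hsum_re : ∑ j, M i0 j * ((starRingEnd ℂ) c * z j).re = ∑ j, M i0 j * m j := by
      have e1 : ((starRingEnd ℂ) c * S).re = ‖S‖ := by rw [hconjS, Complex.ofReal_re]
      have e2 : (starRingEnd ℂ) c * S = ∑ j, (starRingEnd ℂ) c * (((M i0 j : ℂ)) * z j) := by
        rw [← Finset.mul_sum, hrow i0, hS]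
      have e3 : ((starRingEnd ℂ) c * S).re = ∑ j, M i0 j * ((starRingEnd ℂ) c * z j).re := by
        rw [e2, Complex.re_sum]
        refine Finset.sum_congr rfl fun j _ => ?_
        have : (starRingEnd ℂ) c * (((M i0 j : ℂ)) * z j) = ((M i0 j : ℂ)) * ((starRingEnd ℂ) c * z j) := by ring
        rw [this, Complex.re_ofReal_mul]
      have e4 : ‖S‖ = ∑ j, M i0 j * m j := by
        rw [habsS, ← mulVec_entry M m i0, hMm]
        simp
      rw [← e3, e1, e4]
    have hle : ∀ j, ((starRingEnd ℂ) c * z j).re ≤ m j := by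
      intro j
      refine le_trans (Complex.re_le_norm _) (le_of_eq ?_)
      rw [norm_mul, Complex.norm_conj, hcabs, one_mul]
    have hsum0 : ∑ j, M i0 j * (m j - ((starRingEnd ℂ) c * z j).re) = 0 := by
      have he : ∑ j, M i0 j * (m j - ((starRingEnd ℂ) c * z j).re)
          = ∑ j, M i0 j * m j - ∑ j, M i0 j * ((starRingEnd ℂ) c * z j).re := by
        rw [← Finset.sum_sub_distrib]
        exact Finset.sum_congr rfl fun j _ => by ring
      rw [he, hsum_re, sub_self]
    have hzero := (Finset.sum_eq_zero_iff_of_nonneg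
      (fun j _ => mul_nonneg (hM i0 j).le (sub_nonneg.mpr (hle j)))).mp hsum0
    intro j
    have := hzero j (mem_univ j)
    rcases mul_eq_zero.mp this with h | h
    · exact absurd h (hM i0 j).ne'
    · linarith [sub_eq_zero.mp h]
  -- upgrade to full equality
  have hz_eq : ∀ j, z j = c * (m j : ℂ) := by
    intro j
    have h1 : ((starRingEnd ℂ) c * z j).re = ‖(starRingEnd ℂ) c * z j‖ := by
      rw [hre_eq j, norm_mul, Complex.norm_conj, hcabs, one_mul]
    set w : ℂ := (starRingEnd ℂ) c * z j with hw
    have him : w.im = 0 := by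
      have h2 : ‖w‖ ^ 2 = w.re * w.re + w.im * w.im := by
        rw [Complex.sq_norm, Complex.normSq_apply]
      rw [← h1] at h2
      nlinarith [h2]
    have hwre : w = ((m j : ℝ) : ℂ) := by
      have : w = (w.re : ℂ) := by
        apply Complex.ext
        · simp
        · simp [him]
      rw [this, hre_eq j]
    have h2 : c * w = c * ((m j : ℝ) : ℂ) := by rw [hwre]
    rw [hw, ← mul_assoc, Complex.mul_conj, Complex.normSq_eq_norm_sq, hcabs] at h2
    simpa using h2
  -- conclude μ = r
  have hfinal := hrow i0
  have h5 : ∑ j, ((M i0 j : ℂ)) * z j = c * ((r * m i0 : ℝ) : ℂ) := by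
    have : ∀ j, ((M i0 j : ℂ)) * z j = c * ((M i0 j * m j : ℝ) : ℂ) := by
      intro j; rw [hz_eq j]; push_cast; ring
    rw [Finset.sum_congr rfl fun j _ => this j, ← Finset.mul_sum]
    congr 1
    rw [← Complex.ofReal_sum]
    congr 1
    rw [← mulVec_entry M m i0, hMm]
    simp
  rw [h5, hz_eq i0] at hfinal
  have h6 : c * ((r : ℂ) * (m i0 : ℂ)) = c * (μ * (m i0 : ℂ)) := by
    push_cast at hfinal ⊢
    linear_combination hfinal
  have h7 := mul_left_cancel₀ hcne h6
  have h8 : (m i0 : ℂ) ≠ 0 := by exact_mod_cast (hmpos i0).ne'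
  have := mul_right_cancel₀ h8 h7
  exact this.symm







lemma alg_mult_one {n : ℕ} (hn : 0 < n) (M : Matrix (Fin n) (Fin n) ℝ) (hM : ∀ i j, 0 < M i j)
    {u v : Fin n → ℝ} {r : ℝ} (hu : ∀ i, 0 < u i) (hv : ∀ i, 0 < v i) (hr : 0 < r)
    (huu : M *ᵥ u = r • u) (hvv : Mᵀ *ᵥ v = r • v) :
    (M.map Complex.ofReal).charpoly.roots.count ((r : ℝ) : ℂ) = 1 := by
  classical
  have hfin : Nonempty (Fin n) := Fin.pos_iff_nonempty.mp hn
  obtain ⟨i0⟩ := hfin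
  have hfin : Nonempty (Fin n) := ⟨i0⟩
  set A : Matrix (Fin n) (Fin n) ℂ := M.map Complex.ofReal with hA
  set uC : Fin n → ℂ := fun i => (u i : ℂ) with huC_def
  set vC : Fin n → ℂ := fun i => (v i : ℂ) with hvC_def
  have huCne : uC ≠ 0 := fun hc => by
    have h1 := congrFun hc i0
    simp only [huC_def, Pi.zero_apply, Complex.ofReal_eq_zero] at h1
    exact (hu i0).ne' h1
  have huCeig : A *ᵥ uC = (r : ℂ) • uC := by
    rw [huC_def, hA, ofReal_mulVec M u, huu]
    funext i
    simp only [Pi.smul_apply, smul_eq_mul]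
    push_cast
    rfl
  have hvA : ∀ w : Fin n → ℂ, vC ⬝ᵥ (A *ᵥ w) = (r : ℂ) * (vC ⬝ᵥ w) := by
    intro w
    rw [Matrix.dotProduct_mulVec]
    have h1 : vC ᵥ* A = (r : ℂ) • vC := by
      rw [← Matrix.mulVec_transpose]
      have h2 : Aᵀ = (Mᵀ).map Complex.ofReal := by rw [hA, Matrix.transpose_map]
      rw [h2, hvC_def, ofReal_mulVec Mᵀ v, hvv]
      funext i
      simp only [Pi.smul_apply, smul_eq_mul]
      push_cast
      rfl
    rw [h1, smul_dotProduct]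
    simp [smul_eq_mul]
  have hvCuC : vC ⬝ᵥ uC ≠ 0 := by
    have h1 : vC ⬝ᵥ uC = ((∑ i, v i * u i : ℝ) : ℂ) := by
      simp only [dotProduct, hvC_def, huC_def]
      push_cast
      rfl
    rw [h1]
    have h2 : 0 < ∑ i, v i * u i :=
      Finset.sum_pos (fun i _ => mul_pos (hv i) (hu i)) univ_nonempty
    exact_mod_cast h2.ne'
  set f : Module.End ℂ (Fin n → ℂ) := Matrix.toLin' A with hf
  have hf_apply : ∀ w, f w = A *ᵥ w := fun w => Matrix.toLin'_apply A w
  set h : Module.End ℂ (Fin n → ℂ) := f - (r : ℂ) • 1 with hh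
  have hh_apply : ∀ w, h w = A *ᵥ w - (r : ℂ) • w := by
    intro w
    rw [hh]
    simp only [LinearMap.sub_apply, LinearMap.smul_apply, Module.End.one_apply]
    rw [hf_apply]
  set K := LinearMap.ker h with hK
  set W := LinearMap.range h with hW
  have hmemK : ∀ w, w ∈ K ↔ A *ᵥ w = (r : ℂ) • w := by
    intro w
    rw [hK, LinearMap.mem_ker, hh_apply, sub_eq_zero]
  have huCK : uC ∈ K := (hmemK uC).mpr huCeig
  -- geometric simplicity
  have hKspan : K = Submodule.span ℂ {uC} := by
    apply le_antisymm
    · intro z hz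
      rw [hmemK] at hz
      set xr : Fin n → ℝ := fun i => (z i).re with hxr
      set xi : Fin n → ℝ := fun i => (z i).im with hxi
      have hzi : ∀ i, ∑ j, (M i j : ℂ) * z j = (r : ℂ) * z i := by
        intro i
        have h1 := congrFun hz i
        simpa [hA, Matrix.mulVec, dotProduct, Matrix.map_apply] using h1
      have hre : M *ᵥ xr = r • xr := by
        funext i
        have h1 := congrArg Complex.re (hzi i)
        rw [Complex.re_sum] at h1
        simp only [Complex.re_ofReal_mul] at h1
        exact h1
      have him : M *ᵥ xi = r • xi := by
        funext i
        have h1 := congrArg Complex.im (hzi i)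
        rw [Complex.im_sum] at h1
        simp only [Complex.im_ofReal_mul] at h1
        exact h1
      obtain ⟨t1, ht1⟩ := eig_mult hn M hM hu hr huu hre
      obtain ⟨t2, ht2⟩ := eig_mult hn M hM hu hr huu him
      rw [Submodule.mem_span_singleton]
      refine ⟨(t1 : ℂ) + (t2 : ℂ) * Complex.I, ?_⟩
      funext i
      have h1 : xr i = t1 * u i := by rw [ht1]; rfl
      have h2 : xi i = t2 * u i := by rw [ht2]; rfl
      have h3 : z i = (xr i : ℂ) + (xi i : ℂ) * Complex.I := (Complex.re_add_im (z i)).symm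
      simp only [Pi.smul_apply, huC_def, smul_eq_mul]
      rw [h3, h1, h2]
      push_cast
      ring
    · rw [Submodule.span_singleton_le_iff_mem]
      exact huCK
  have hdisj : Disjoint K W := by
    rw [Submodule.disjoint_def]
    intro x hxK hxW
    obtain ⟨t, ht⟩ := Submodule.mem_span_singleton.mp (hKspan ▸ hxK)
    obtain ⟨y, hy⟩ := hxW
    have h1 : vC ⬝ᵥ x = 0 := by
      rw [← hy, hh_apply, dotProduct_sub, hvA, dotProduct_smul]
      simp [smul_eq_mul]
    rw [← ht, dotProduct_smul, smul_eq_mul] at h1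
    rcases mul_eq_zero.mp h1 with h2 | h2
    · rw [← ht, h2, zero_smul]
    · exact absurd h2 hvCuC
  have hambient : Module.finrank ℂ (Fin n → ℂ) = n := Module.finrank_fin_fun ℂ
  have hdim : Module.finrank ℂ W + Module.finrank ℂ K = n := by
    have h1 := LinearMap.finrank_range_add_finrank_ker h
    rwa [hambient] at h1
  have hKone : Module.finrank ℂ K = 1 := by
    rw [hKspan]; exact finrank_span_singleton huCne
  have hcompl : IsCompl K W := by
    refine ⟨hdisj, codisjoint_iff.mpr ?_⟩
    apply Submodule.eq_top_of_finrank_eq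
    have h2 := Submodule.finrank_sup_add_finrank_inf_eq K W
    rw [disjoint_iff.mp hdisj, finrank_bot] at h2
    rw [hambient]
    omega
  have hcomm : ∀ x, h (f x) = f (h x) := by
    intro x
    rw [hh]
    simp only [LinearMap.sub_apply, LinearMap.smul_apply, Module.End.one_apply, map_sub,
      _root_.map_smul]
  have hKinv : ∀ x ∈ K, f x ∈ K := by
    intro x hx
    rw [hK, LinearMap.mem_ker] at hx ⊢
    rw [hcomm, hx, map_zero]
  have hWinv : ∀ x ∈ W, f x ∈ W := by
    rintro x ⟨y, rfl⟩
    exact ⟨f y, hcomm y⟩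
  set f1 := f.restrict hKinv with hf1
  set f2 := f.restrict hWinv with hf2
  set e := Submodule.prodEquivOfIsCompl K W hcompl with he
  have he_apply : ∀ p : K × W, e p = (p.1 : Fin n → ℂ) + (p.2 : Fin n → ℂ) := by
    intro p
    calc e p = (↑e : (K × W) →ₗ[ℂ] (Fin n → ℂ)) p := rfl
    _ = (K.subtype.coprod W.subtype) p := by rw [Submodule.coe_prodEquivOfIsCompl]
    _ = ↑p.1 + ↑p.2 := rfl
  have hfe : f = e.conj (f1.prodMap f2) := by
    apply LinearMap.ext
    intro x
    rw [LinearEquiv.conj_apply]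
    simp only [LinearMap.coe_comp, Function.comp_apply, LinearEquiv.coe_coe]
    have hx : x = e (e.symm x) := (e.apply_symm_apply x).symm
    conv_lhs => rw [hx]
    rw [he_apply, he_apply]
    have h1 : ((f1.prodMap f2) (e.symm x)).1 = f1 (e.symm x).1 := rfl
    have h2 : ((f1.prodMap f2) (e.symm x)).2 = f2 (e.symm x).2 := rfl
    rw [h1, h2, LinearMap.restrict_coe_apply, LinearMap.restrict_coe_apply, map_add]
  have hchar : A.charpoly = f1.charpoly * f2.charpoly := by
    have h1 := LinearMap.charpoly_toMatrix f (Pi.basisFun ℂ (Fin n))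
    have h2 : LinearMap.toMatrix (Pi.basisFun ℂ (Fin n)) (Pi.basisFun ℂ (Fin n)) f = A := by
      rw [LinearMap.toMatrix_eq_toMatrix', hf]
      exact LinearMap.toMatrix'_toLin' A
    rw [h2] at h1
    rw [h1, hfe, LinearEquiv.charpoly_conj, LinearMap.charpoly_prodMap]
  -- charpoly f1 = X - C r
  have hf1smul : ∀ x : K, f1 x = ((r : ℂ)) • x := by
    intro x
    apply Subtype.ext
    rw [LinearMap.restrict_coe_apply, hf_apply]
    have := (hmemK ↑x).mp x.2
    rw [this]
    rfl
  have hp1 : f1.charpoly = X - C ((r : ℝ) : ℂ) := by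
    have hdeg : f1.charpoly.natDegree = 1 := by
      rw [LinearMap.charpoly_natDegree, hKone]
    have hmon := f1.charpoly_monic
    have heq := hmon.eq_X_add_C hdeg
    have haev := f1.aeval_self_charpoly
    rw [heq] at haev
    simp only [map_add, aeval_X, aeval_C] at haev
    set a := f1.charpoly.coeff 0 with hc0
    have hval : ∀ x : K, ((r : ℂ) + a) • x = 0 := by
      intro x
      have h1 := congrFun (congrArg DFunLike.coe haev) x
      simp only [LinearMap.add_apply, LinearMap.zero_apply, Module.algebraMap_end_apply] at h1
      rw [hf1smul x] at h1
      rw [add_smul]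
      exact h1
    have huK : (⟨uC, huCK⟩ : K) ≠ 0 := fun hc => huCne (congrArg Subtype.val hc)
    have h2 := hval ⟨uC, huCK⟩
    rcases smul_eq_zero.mp h2 with h3 | h3
    · have ha : a = -(r : ℂ) := by linear_combination h3
      rw [heq, ha, map_neg, ← sub_eq_add_neg]
    · exact absurd h3 huK
  -- r is not a root of charpoly f2
  have hp2 : ¬ f2.charpoly.IsRoot ((r : ℝ) : ℂ) := by
    intro hroot
    set b2 := Module.finBasis ℂ W with hb2
    set B := LinearMap.toMatrix b2 b2 f2 with hB
    have h1 : f2.charpoly = B.charpoly := (LinearMap.charpoly_toMatrix f2 b2).symm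
    rw [h1] at hroot
    have h2 : ((r : ℂ) • (1 : Matrix _ _ ℂ) - B).det = 0 := by
      rw [← charpoly_eval B (r : ℂ)]
      exact hroot
    obtain ⟨w, hwne, hw⟩ := Matrix.exists_mulVec_eq_zero_iff.mpr h2
    rw [Matrix.sub_mulVec, Matrix.smul_mulVec, Matrix.one_mulVec, sub_eq_zero] at hw
    -- build eigenvector in W
    set x : W := b2.equivFun.symm w with hx
    have h4 : b2.equivFun x = w := by rw [hx]; exact b2.equivFun.apply_symm_apply w
    have hxne : x ≠ 0 := by
      intro hc
      apply hwne
      rw [← h4, hc, map_zero]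
    have hrepr : ⇑(b2.repr x) = w := by
      rw [Module.Basis.equivFun_apply] at h4
      exact h4
    have hfx : f2 x = (r : ℂ) • x := by
      apply b2.repr.injective
      have key := LinearMap.toMatrix_mulVec_repr b2 b2 f2 x
      apply DFunLike.coe_injective
      calc ⇑(b2.repr (f2 x)) = B *ᵥ ⇑(b2.repr x) := key.symm
      _ = B *ᵥ w := by rw [hrepr]
      _ = (r : ℂ) • w := hw.symm
      _ = (r : ℂ) • ⇑(b2.repr x) := by rw [hrepr]
      _ = ⇑((r : ℂ) • (b2.repr x)) := (Finsupp.coe_smul _ _).symm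
      _ = ⇑(b2.repr ((r : ℂ) • x)) := by rw [_root_.map_smul]
    have hxK : (↑x : Fin n → ℂ) ∈ K := by
      rw [hmemK]
      have h3 : (↑(f2 x) : Fin n → ℂ) = A *ᵥ ↑x := by
        rw [hf2, LinearMap.restrict_coe_apply, hf_apply]
      rw [← h3, hfx]
      rfl
    have hx0 : (↑x : Fin n → ℂ) = 0 := Submodule.disjoint_def.mp hdisj ↑x hxK x.2
    exact hxne (Subtype.ext hx0)
  -- conclusion
  rw [hchar, hp1]
  have hne1 : (X - C ((r : ℝ) : ℂ)) ≠ 0 := Polynomial.X_sub_C_ne_zero _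
  have hne2 : f2.charpoly ≠ 0 := f2.charpoly_monic.ne_zero
  rw [Polynomial.roots_mul (mul_ne_zero hne1 hne2), Multiset.count_add,
    Polynomial.roots_X_sub_C, Multiset.count_singleton_self,
    Polynomial.count_roots, Polynomial.rootMultiplicity_eq_zero hp2]


open Matrix

/-- The spectral radius of a real square matrix: the supremum of the absolute values of
its complex eigenvalues (the spectrum of the matrix viewed over `ℂ`). -/
noncomputable def specRadC {n : ℕ} (M : Matrix (Fin n) (Fin n) ℝ) : ℝ :=
  sSup ((fun z : ℂ => ‖z‖) '' spectrum ℂ (M.map Complex.ofReal))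

theorem stmt_14 (n : ℕ) (hn : 0 < n) (M : Matrix (Fin n) (Fin n) ℝ)
    (hM : ∀ i j, 0 < M i j) :
    -- (a)
    0 < specRadC M ∧
    -- (b) ρ(M) is an eigenvalue of algebraic multiplicity one
    (M.map Complex.ofReal).charpoly.roots.count ((specRadC M : ℝ) : ℂ) = 1 ∧
    -- (c) unique eigenvector with entries summing to one; it is positive
    ((∃! x : Fin n → ℝ, M *ᵥ x = specRadC M • x ∧ ∑ i, x i = 1) ∧
      ∀ x : Fin n → ℝ, M *ᵥ x = specRadC M • x → ∑ i, x i = 1 → ∀ i, 0 < x i) ∧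
    -- (d)
    ∀ z ∈ spectrum ℂ (M.map Complex.ofReal),
      z ≠ ((specRadC M : ℝ) : ℂ) → ‖z‖ < specRadC M := by
  classical
  have hfin : Nonempty (Fin n) := Fin.pos_iff_nonempty.mp hn
  obtain ⟨u, r, hu, husum, hr, huu⟩ := perron_exists hn M hM
  obtain ⟨v, r', hv, hvsum, hr', hvv0⟩ := perron_exists hn Mᵀ (fun i j => hM j i)
  have hS : 0 < ∑ i, v i * u i :=
    Finset.sum_pos (fun i _ => mul_pos (hv i) (hu i)) Finset.univ_nonempty
  have hrr : r' = r := by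
    have h1 := pairing M hvv0 u
    have h2 : ∑ i, v i * (M *ᵥ u) i = r * ∑ i, v i * u i := by
      rw [huu, Finset.mul_sum]
      exact Finset.sum_congr rfl fun i _ => by
        simp only [Pi.smul_apply, smul_eq_mul]; ring
    rw [h2] at h1
    exact mul_right_cancel₀ hS.ne' h1.symm
  have hvv : Mᵀ *ᵥ v = r • v := by rw [hvv0, hrr]
  set A : Matrix (Fin n) (Fin n) ℂ := M.map Complex.ofReal with hA
  set uC : Fin n → ℂ := fun i => (u i : ℂ) with huC_def
  obtain ⟨i0⟩ := hfin
  have huCne : uC ≠ 0 := fun hc => by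
    have h1 := congrFun hc i0
    simp only [huC_def, Pi.zero_apply, Complex.ofReal_eq_zero] at h1
    exact (hu i0).ne' h1
  have huCeig : A *ᵥ uC = ((r : ℝ) : ℂ) • uC := by
    rw [huC_def, hA, ofReal_mulVec M u, huu]
    funext i
    simp only [Pi.smul_apply, smul_eq_mul]
    push_cast
    rfl
  have hrspec : ((r : ℝ) : ℂ) ∈ spectrum ℂ A := (spec_iff A _).mpr ⟨uC, huCne, huCeig⟩
  have habs_r : ‖((r : ℝ) : ℂ)‖ = r := by
    rw [Complex.norm_real, Real.norm_eq_abs, abs_of_pos hr]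
  have hub : ∀ y ∈ (fun z : ℂ => ‖z‖) '' spectrum ℂ A, y ≤ r := by
    rintro y ⟨μ, hμ, rfl⟩
    obtain ⟨z, hzne, hzz⟩ := (spec_iff A μ).mp hμ
    exact (cw hn M hM hv hr hvv hzne hzz).1
  have hspec : specRadC M = r := by
    unfold specRadC
    rw [← hA]
    apply le_antisymm
    · exact csSup_le ⟨r, ⟨((r : ℝ) : ℂ), hrspec, habs_r⟩⟩ hub
    · exact le_csSup ⟨r, hub⟩ ⟨((r : ℝ) : ℂ), hrspec, habs_r⟩
  rw [hspec]
  refine ⟨hr, ?_, ⟨⟨u, ⟨huu, husum⟩, ?_⟩, ?_⟩, ?_⟩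
  · -- (b)
    exact alg_mult_one hn M hM hu hv hr huu hvv
  · -- uniqueness in (c)
    rintro y ⟨hy1, hy2⟩
    obtain ⟨t, rfl⟩ := eig_mult hn M hM hu hr huu hy1
    have hts : ∑ i, (t • u) i = t := by
      simp only [Pi.smul_apply, smul_eq_mul, ← Finset.mul_sum, husum, mul_one]
    rw [hts] at hy2
    rw [hy2, one_smul]
  · -- positivity in (c)
    intro x hx1 hx2 i
    obtain ⟨t, rfl⟩ := eig_mult hn M hM hu hr huu hx1
    have hts : ∑ i, (t • u) i = t := by
      simp only [Pi.smul_apply, smul_eq_mul, ← Finset.mul_sum, husum, mul_one]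
    rw [hts] at hx2
    rw [hx2, one_smul]
    exact hu i
  · -- (d)
    intro z hzspec hznr
    obtain ⟨w, hwne, hww⟩ := (spec_iff A z).mp hzspec
    have hcw := cw hn M hM hv hr hvv hwne hww
    exact lt_of_le_of_ne hcw.1 fun habs => hznr (hcw.2 habs)
end

section
/- (Perron–Frobenius) Let M ∈ ℝ^{n×n} be a matrix all of whose entries are nonnegative. Then the spectral radius ρ(M) is an eigenvalue of M, and M has a nonzero eigenvector with all entries nonnegative corresponding to the eigenvalue ρ(M). -/
open Matrix

lemma mulVec_apply_eq {n : ℕ} (B : Matrix (Fin n) (Fin n) ℝ) (x : Fin n → ℝ) (i : Fin n) :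
    (B *ᵥ x) i = ∑ j, B i j * x j := rfl

lemma matC_mem_spectrum_iff {n : ℕ} (A : Matrix (Fin n) (Fin n) ℂ) (μ : ℂ) :
    μ ∈ spectrum ℂ A ↔ ∃ v : Fin n → ℂ, v ≠ 0 ∧ A *ᵥ v = μ • v := by
  rw [← AlgEquiv.spectrum_eq (Matrix.toLinAlgEquiv') A,
    ← Module.End.hasEigenvalue_iff_mem_spectrum]
  constructor
  · intro h
    obtain ⟨v, hv⟩ := h.exists_hasEigenvector
    refine ⟨v, hv.2, ?_⟩
    have := hv.apply_eq_smul
    simpa [Matrix.toLinAlgEquiv'_apply] using this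
  · rintro ⟨v, hv0, hv⟩
    exact Module.End.hasEigenvalue_of_hasEigenvector
      ⟨Module.End.mem_eigenspace_iff.mpr (by simpa [Matrix.toLinAlgEquiv'_apply] using hv), hv0⟩

lemma pf_pos {n : ℕ} (hn : 0 < n) (B : Matrix (Fin n) (Fin n) ℝ) (hB : ∀ i j, 0 < B i j)
    (r₀ : ℝ) (hr₀ : 0 ≤ r₀) (y₀ : Fin n → ℝ) (hy₀ : ∀ i, 0 ≤ y₀ i)
    (hs₀ : ∑ i, y₀ i = 1) (hsub : ∀ i, r₀ * y₀ i ≤ (B *ᵥ y₀) i) :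
    ∃ r : ℝ, ∃ x : Fin n → ℝ, r₀ ≤ r ∧ (∀ i, 0 ≤ x i) ∧ (∑ i, x i = 1) ∧ B *ᵥ x = r • x := by
  haveI : Nonempty (Fin n) := ⟨⟨0, hn⟩⟩
  set K : Set (ℝ × (Fin n → ℝ)) :=
    {p | 0 ≤ p.1 ∧ (∀ i, 0 ≤ p.2 i) ∧ (∑ i, p.2 i = 1) ∧ ∀ i, p.1 * p.2 i ≤ ∑ j, B i j * p.2 j}
    with hKdef
  have hK0 : (r₀, y₀) ∈ K := ⟨hr₀, hy₀, hs₀, fun i => by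
    simpa [mulVec_apply_eq] using hsub i⟩
  set C : ℝ := ∑ i, ∑ j, B i j with hC
  -- K is closed
  have hclosed : IsClosed K := by
    have h1 : IsClosed {p : ℝ × (Fin n → ℝ) | 0 ≤ p.1} :=
      isClosed_le continuous_const continuous_fst
    have h2 : IsClosed {p : ℝ × (Fin n → ℝ) | ∀ i, 0 ≤ p.2 i} := by
      have : {p : ℝ × (Fin n → ℝ) | ∀ i, 0 ≤ p.2 i} = ⋂ i, {p | 0 ≤ p.2 i} := by
        ext p; simp
      rw [this]
      exact isClosed_iInter fun i =>
        isClosed_le continuous_const ((continuous_apply i).comp continuous_snd)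
    have h3 : IsClosed {p : ℝ × (Fin n → ℝ) | ∑ i, p.2 i = 1} := by
      refine isClosed_eq ?_ continuous_const
      exact continuous_finset_sum _ fun i _ => (continuous_apply i).comp continuous_snd
    have h4 : IsClosed {p : ℝ × (Fin n → ℝ) | ∀ i, p.1 * p.2 i ≤ ∑ j, B i j * p.2 j} := by
      have : {p : ℝ × (Fin n → ℝ) | ∀ i, p.1 * p.2 i ≤ ∑ j, B i j * p.2 j}
          = ⋂ i, {p | p.1 * p.2 i ≤ ∑ j, B i j * p.2 j} := by ext p; simp
      rw [this]
      refine isClosed_iInter fun i => isClosed_le ?_ ?_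
      · exact continuous_fst.mul ((continuous_apply i).comp continuous_snd)
      · exact continuous_finset_sum _ fun j _ =>
          continuous_const.mul ((continuous_apply j).comp continuous_snd)
    have : K = {p : ℝ × (Fin n → ℝ) | 0 ≤ p.1} ∩ ({p | ∀ i, 0 ≤ p.2 i} ∩
        ({p | ∑ i, p.2 i = 1} ∩ {p | ∀ i, p.1 * p.2 i ≤ ∑ j, B i j * p.2 j})) := by
      ext p; simp only [hKdef, Set.mem_setOf_eq, Set.mem_inter_iff]
    rw [this]
    exact h1.inter (h2.inter (h3.inter h4))
  -- K is contained in a compact box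
  have hbox : K ⊆ Set.Icc ((0 : ℝ), (0 : Fin n → ℝ)) (C, fun _ => (1 : ℝ)) := by
    rintro ⟨r, x⟩ ⟨hr, hx, hsx, hineq⟩
    have hx1 : ∀ j, x j ≤ 1 := by
      intro j
      calc x j ≤ ∑ i, x i := Finset.single_le_sum (fun i _ => hx i) (Finset.mem_univ j)
      _ = 1 := hsx
    have hrC : r ≤ C := by
      have : r = ∑ i, r * x i := by rw [← Finset.mul_sum, hsx, mul_one]
      rw [this, hC]
      refine Finset.sum_le_sum fun i _ => le_trans (hineq i) ?_
      refine Finset.sum_le_sum fun j _ => ?_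
      nlinarith [hx1 j, hB i j, hx j]
    refine ⟨⟨hr, fun i => hx i⟩, ⟨hrC, fun i => hx1 i⟩⟩
  have hcpt : IsCompact K := isCompact_Icc.of_isClosed_subset hclosed hbox
  obtain ⟨p, hpK, hpmax⟩ := hcpt.exists_isMaxOn ⟨(r₀, y₀), hK0⟩ continuous_fst.continuousOn
  obtain ⟨hp1, hp2, hp3, hp4⟩ := hpK
  have hr0r : r₀ ≤ p.1 := hpmax hK0
  refine ⟨p.1, p.2, hr0r, hp2, hp3, ?_⟩
  -- show B *ᵥ p.2 = p.1 • p.2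
  by_contra hne
  set y : Fin n → ℝ := B *ᵥ p.2 with hy
  have hxpos : ∃ j, 0 < p.2 j := by
    by_contra h
    push_neg at h
    have : ∀ j, p.2 j = 0 := fun j => le_antisymm (h j) (hp2 j)
    simp [Finset.sum_congr rfl fun j _ => this j] at hp3
  have hypos : ∀ i, 0 < y i := by
    intro i
    rw [hy, mulVec_apply_eq]
    obtain ⟨j, hj⟩ := hxpos
    exact Finset.sum_pos' (fun k _ => mul_nonneg (hB i k).le (hp2 k))
      ⟨j, Finset.mem_univ j, mul_pos (hB i j) hj⟩
  set w : Fin n → ℝ := fun i => y i - p.1 * p.2 i with hwdef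
  have hw : ∀ i, 0 ≤ w i := fun i => by
    have := hp4 i
    rw [hwdef]
    simp only [sub_nonneg]
    rw [hy, mulVec_apply_eq]
    exact this
  have hwne : ∃ i, 0 < w i := by
    by_contra h
    push_neg at h
    have hweq : ∀ i, w i = 0 := fun i => le_antisymm (h i) (hw i)
    apply hne
    funext i
    have h2 : y i - p.1 * p.2 i = 0 := hweq i
    show y i = p.1 * p.2 i
    linarith
  have hBw : ∀ i, 0 < (B *ᵥ w) i := by
    intro i
    rw [mulVec_apply_eq]
    obtain ⟨j, hj⟩ := hwne
    exact Finset.sum_pos' (fun k _ => mul_nonneg (hB i k).le (hw k))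
      ⟨j, Finset.mem_univ j, mul_pos (hB i j) hj⟩
  set δ : ℝ := Finset.univ.inf' Finset.univ_nonempty (fun i => (B *ᵥ w) i / y i) with hδdef
  have hδpos : 0 < δ := by
    rw [hδdef, Finset.lt_inf'_iff]
    exact fun i _ => div_pos (hBw i) (hypos i)
  have hδle : ∀ i, δ * y i ≤ (B *ᵥ w) i := by
    intro i
    have h1 : δ ≤ (B *ᵥ w) i / y i := Finset.inf'_le _ (Finset.mem_univ i)
    exact (le_div_iff₀ (hypos i)).mp h1
  have key : ∀ i, (p.1 + δ) * y i ≤ (B *ᵥ y) i := by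
    intro i
    have hdecomp : y = p.1 • p.2 + w := by
      funext i; simp only [hwdef, Pi.add_apply, Pi.smul_apply, smul_eq_mul]; ring
    have : (B *ᵥ y) i = p.1 * y i + (B *ᵥ w) i := by
      conv_lhs => rw [hdecomp]
      rw [Matrix.mulVec_add, Matrix.mulVec_smul]
      simp [hy, smul_eq_mul]
    rw [this, add_mul]
    linarith [hδle i]
  set s : ℝ := ∑ i, y i with hs
  have hspos : 0 < s := Finset.sum_pos (fun i _ => hypos i) Finset.univ_nonempty
  have hmem : (p.1 + δ, s⁻¹ • y) ∈ K := by
    refine ⟨by positivity, fun i => by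
      have h1 := (hypos i).le
      have h2 : (0:ℝ) ≤ s⁻¹ := by positivity
      simp only [Pi.smul_apply, smul_eq_mul]
      positivity, ?_, ?_⟩
    · simp only [Pi.smul_apply, smul_eq_mul]
      rw [← Finset.mul_sum, ← hs, inv_mul_cancel₀ hspos.ne']
    · intro i
      have h1 : (∑ j, B i j * (s⁻¹ • y) j) = s⁻¹ * (B *ᵥ y) i := by
        rw [mulVec_apply_eq, Finset.mul_sum]
        refine Finset.sum_congr rfl fun j _ => ?_
        simp [smul_eq_mul]; ring
      rw [h1]
      simp only [Pi.smul_apply, smul_eq_mul]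
      calc (p.1 + δ) * (s⁻¹ * y i) = s⁻¹ * ((p.1 + δ) * y i) := by ring
        _ ≤ s⁻¹ * (B *ᵥ y) i := by
            exact mul_le_mul_of_nonneg_left (key i) (by positivity)
  have h2 : p.1 + δ ≤ p.1 := hpmax hmem
  linarith

lemma real_eig_mem {n : ℕ} (M : Matrix (Fin n) (Fin n) ℝ) (r : ℝ) (x : Fin n → ℝ)
    (hx : x ≠ 0) (hMx : M *ᵥ x = r • x) :
    (r : ℂ) ∈ spectrum ℂ (M.map Complex.ofReal) := by
  refine (matC_mem_spectrum_iff _ _).mpr ⟨fun i => (x i : ℂ), ?_, ?_⟩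
  · intro h
    apply hx
    funext i
    have := congrFun h i
    simpa using this
  · funext i
    have hMi := congrFun hMx i
    rw [mulVec_apply_eq] at hMi
    show (∑ j, (M.map Complex.ofReal) i j * (x j : ℂ)) = (r : ℂ) • (x i : ℂ)
    simp only [Matrix.map_apply, smul_eq_mul]
    have : (∑ j, ((M i j : ℂ) * (x j : ℂ))) = ((∑ j, M i j * x j : ℝ) : ℂ) := by
      push_cast; ring_nf
    rw [this, hMi]
    push_cast
    simp [smul_eq_mul]

theorem stmt_15 (n : ℕ) (hn : 0 < n) (M : Matrix (Fin n) (Fin n) ℝ)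
    (hM : ∀ i j, 0 ≤ M i j) :
    ((specRadC M : ℝ) : ℂ) ∈ spectrum ℂ (M.map Complex.ofReal) ∧
    ∃ x : Fin n → ℝ, x ≠ 0 ∧ (∀ i, 0 ≤ x i) ∧ M *ᵥ x = specRadC M • x := by
  haveI : Nonempty (Fin n) := ⟨⟨0, hn⟩⟩
  set A := M.map Complex.ofReal with hA
  set ρ := specRadC M with hρdef
  -- the spectrum is finite and nonempty
  have hfin : (spectrum ℂ A).Finite := Matrix.finite_spectrum A
  have hne : (spectrum ℂ A).Nonempty :=
    spectrum.nonempty_of_isAlgClosed_of_finiteDimensional ℂ A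
  have hSfin : ((fun z : ℂ => ‖z‖) '' spectrum ℂ A).Finite := hfin.image _
  have hSne : ((fun z : ℂ => ‖z‖) '' spectrum ℂ A).Nonempty := hne.image _
  have hbdd : BddAbove ((fun z : ℂ => ‖z‖) '' spectrum ℂ A) := hSfin.bddAbove
  have hmem : ρ ∈ (fun z : ℂ => ‖z‖) '' spectrum ℂ A := by
    rw [hρdef, specRadC]
    exact hSne.csSup_mem hSfin
  obtain ⟨lam, hlam, hlamabs⟩ := hmem
  have hρ0 : 0 ≤ ρ := by rw [← hlamabs]; exact norm_nonneg lam
  -- the eigenvector of lam gives a nonnegative subinvariant vector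
  obtain ⟨z, hz0, hzeig⟩ := (matC_mem_spectrum_iff A lam).mp hlam
  set y : Fin n → ℝ := fun i => ‖z i‖ with hy
  have hy0 : ∀ i, 0 ≤ y i := fun i => norm_nonneg _
  have hysub : ∀ i, ρ * y i ≤ (M *ᵥ y) i := by
    intro i
    have h1 : ‖(A *ᵥ z) i‖ = ‖lam * z i‖ := by
      rw [hzeig]; simp [smul_eq_mul]
    have h2 : ‖(A *ᵥ z) i‖ ≤ ∑ j, M i j * y j := by
      show ‖∑ j, A i j * z j‖ ≤ _
      refine le_trans (norm_sum_le _ _) (Finset.sum_le_sum fun j _ => ?_)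
      rw [norm_mul, hA]
      simp only [Matrix.map_apply, Complex.norm_real, Real.norm_eq_abs, hy]
      rw [abs_of_nonneg (hM i j)]
    rw [h1, norm_mul, show ‖lam‖ = ρ from hlamabs] at h2
    rw [mulVec_apply_eq]
    exact h2
  have hys : 0 < ∑ i, y i := by
    obtain ⟨i, hi⟩ := Function.ne_iff.mp hz0
    refine Finset.sum_pos' (fun j _ => hy0 j) ⟨i, Finset.mem_univ i, ?_⟩
    simpa [hy] using hi
  set t : ℝ := (∑ i, y i)⁻¹ with ht
  have ht0 : 0 < t := by positivity
  set yv : Fin n → ℝ := t • y with hyv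
  have hyv0 : ∀ i, 0 ≤ yv i := fun i => by
    simp only [hyv, Pi.smul_apply, smul_eq_mul]; exact mul_nonneg ht0.le (hy0 i)
  have hyvs : ∑ i, yv i = 1 := by
    simp only [hyv, Pi.smul_apply, smul_eq_mul]
    rw [← Finset.mul_sum, ht, inv_mul_cancel₀ hys.ne']
  have hyvsub : ∀ i, ρ * yv i ≤ (M *ᵥ yv) i := by
    intro i
    have : (M *ᵥ yv) i = t * (M *ᵥ y) i := by
      rw [hyv, Matrix.mulVec_smul]; simp [smul_eq_mul]
    rw [this]
    simp only [hyv, Pi.smul_apply, smul_eq_mul]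
    calc ρ * (t * y i) = t * (ρ * y i) := by ring
      _ ≤ t * (M *ᵥ y) i := mul_le_mul_of_nonneg_left (hysub i) ht0.le
  -- perturbed positive matrices
  set B : ℕ → Matrix (Fin n) (Fin n) ℝ :=
    fun k => Matrix.of (fun i j => M i j + ((k : ℝ) + 1)⁻¹) with hB
  have hBpos : ∀ k i j, 0 < B k i j := fun k i j => by
    have : (0:ℝ) < ((k : ℝ) + 1)⁻¹ := by positivity
    simpa [hB] using add_pos_of_nonneg_of_pos (hM i j) this
  have hBsub : ∀ k i, ρ * yv i ≤ (B k *ᵥ yv) i := by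
    intro k i
    refine le_trans (hyvsub i) ?_
    rw [mulVec_apply_eq, mulVec_apply_eq]
    refine Finset.sum_le_sum fun j _ => ?_
    have h1 : (0:ℝ) < ((k : ℝ) + 1)⁻¹ := by positivity
    have : M i j ≤ B k i j := by simp [hB]; positivity
    exact mul_le_mul_of_nonneg_right this (hyv0 j)
  choose r x hρr hx0 hxs heig using fun k =>
    pf_pos hn (B k) (hBpos k) ρ hρ0 yv hyv0 hyvs (hBsub k)
  -- bound on r k
  set C : ℝ := (∑ i, ∑ j : Fin n, M i j) + n * n with hC
  have hrC : ∀ k, r k ≤ C := by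
    intro k
    have hx1 : ∀ j, x k j ≤ 1 := fun j =>
      (Finset.single_le_sum (fun i _ => hx0 k i) (Finset.mem_univ j)).trans (hxs k).le
    have h1 : r k = ∑ i, (B k *ᵥ x k) i := by
      rw [heig k]
      simp only [Pi.smul_apply, smul_eq_mul]
      rw [← Finset.mul_sum, hxs k, mul_one]
    rw [h1, hC]
    have hk1 : ((k : ℝ) + 1)⁻¹ ≤ 1 := by
      rw [inv_le_one_iff₀]; right; linarith [Nat.cast_nonneg (α := ℝ) k]
    have h2 : ∀ i, (B k *ᵥ x k) i ≤ (∑ j, M i j) + n := by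
      intro i
      rw [mulVec_apply_eq]
      have hterm : ∀ j, B k i j * x k j ≤ M i j + 1 := by
        intro j
        have hb : B k i j ≤ M i j + 1 := by
          simp only [hB, Matrix.of_apply]
          linarith
        have := hx0 k j
        have := hx1 j
        nlinarith [(hBpos k i j).le]
      calc ∑ j, B k i j * x k j ≤ ∑ j : Fin n, (M i j + 1) :=
            Finset.sum_le_sum fun j _ => hterm j
        _ = (∑ j, M i j) + n := by
            rw [Finset.sum_add_distrib]
            simp
    calc ∑ i, (B k *ᵥ x k) i ≤ ∑ i : Fin n, ((∑ j, M i j) + n) :=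
          Finset.sum_le_sum fun i _ => h2 i
      _ = (∑ i, ∑ j : Fin n, M i j) + n * n := by
          rw [Finset.sum_add_distrib]
          simp [mul_comm]
  -- extract a convergent subsequence
  have hr0 : ∀ k, 0 ≤ r k := fun k => le_trans hρ0 (hρr k)
  have hbox : ∀ k, (r k, x k) ∈ Set.Icc ((0:ℝ), (0 : Fin n → ℝ)) (C, fun _ => (1:ℝ)) := by
    intro k
    refine ⟨⟨hr0 k, fun i => hx0 k i⟩, ⟨hrC k, fun i => ?_⟩⟩
    exact (Finset.single_le_sum (fun j _ => hx0 k j) (Finset.mem_univ i)).trans (hxs k).le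
  obtain ⟨q, hqmem, φ, hφ, hconv⟩ := isCompact_Icc.tendsto_subseq hbox
  set r' : ℝ := q.1 with hr'
  set x' : Fin n → ℝ := q.2 with hx'
  have hrconv : Filter.Tendsto (fun k => r (φ k)) Filter.atTop (nhds r') :=
    (continuous_fst.tendsto q).comp hconv
  have hxconv : ∀ j, Filter.Tendsto (fun k => x (φ k) j) Filter.atTop (nhds (x' j)) :=
    fun j => (((continuous_apply j).comp continuous_snd).tendsto q).comp hconv
  have hεconv : Filter.Tendsto (fun k => ((φ k : ℝ) + 1)⁻¹) Filter.atTop (nhds 0) := by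
    have h1 : Filter.Tendsto (fun m : ℕ => ((m : ℝ) + 1)⁻¹) Filter.atTop (nhds 0) := by
      simpa [one_div] using tendsto_one_div_add_atTop_nhds_zero_nat (𝕜 := ℝ)
    exact h1.comp hφ.tendsto_atTop
  -- pass to the limit in the eigenvalue equation
  have hx'0 : ∀ i, 0 ≤ x' i := fun i =>
    ge_of_tendsto' (hxconv i) (fun k => hx0 (φ k) i)
  have hx's : ∑ i, x' i = 1 := by
    have h1 : Filter.Tendsto (fun k => ∑ i, x (φ k) i) Filter.atTop (nhds (∑ i, x' i)) :=
      tendsto_finset_sum _ (fun i _ => hxconv i)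
    have h2 : Filter.Tendsto (fun k => ∑ i, x (φ k) i) Filter.atTop (nhds 1) := by
      simpa [hxs] using tendsto_const_nhds (α := ℝ) (f := Filter.atTop (α := ℕ))
    exact tendsto_nhds_unique h1 h2
  have hρr' : ρ ≤ r' := ge_of_tendsto' hrconv (fun k => hρr (φ k))
  have heig' : M *ᵥ x' = r' • x' := by
    funext i
    have h1 : Filter.Tendsto (fun k => (B (φ k) *ᵥ x (φ k)) i) Filter.atTop
        (nhds ((M *ᵥ x') i)) := by
      have : ∀ k, (B (φ k) *ᵥ x (φ k)) i = ∑ j, (M i j + ((φ k : ℝ) + 1)⁻¹) * x (φ k) j := by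
        intro k; rw [mulVec_apply_eq]; rfl
      simp only [this, mulVec_apply_eq]
      have : Filter.Tendsto (fun k => ∑ j, (M i j + ((φ k : ℝ) + 1)⁻¹) * x (φ k) j)
          Filter.atTop (nhds (∑ j, (M i j + 0) * x' j)) :=
        tendsto_finset_sum _ (fun j _ =>
          ((tendsto_const_nhds.add hεconv).mul (hxconv j)))
      simpa using this
    have h2 : Filter.Tendsto (fun k => (B (φ k) *ᵥ x (φ k)) i) Filter.atTop
        (nhds (r' * x' i)) := by
      have : ∀ k, (B (φ k) *ᵥ x (φ k)) i = r (φ k) * x (φ k) i := by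
        intro k; rw [heig (φ k)]; simp [smul_eq_mul]
      simp only [this]
      exact hrconv.mul (hxconv i)
    have := tendsto_nhds_unique h1 h2
    simpa [smul_eq_mul] using this
  have hx'ne : x' ≠ 0 := by
    intro h
    rw [h] at hx's
    simp at hx's
  -- r' is an eigenvalue, hence r' ≤ ρ, hence r' = ρ
  have hr'mem : ((r' : ℝ) : ℂ) ∈ spectrum ℂ A := real_eig_mem M r' x' hx'ne heig'
  have hr'le : r' ≤ ρ := by
    have h1 : ‖((r' : ℝ) : ℂ)‖ ≤ ρ := by
      rw [hρdef, specRadC]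
      exact le_csSup hbdd ⟨_, hr'mem, rfl⟩
    rw [Complex.norm_real, Real.norm_eq_abs, abs_of_nonneg (le_trans hρ0 hρr')] at h1
    exact h1
  have hr'eq : r' = ρ := le_antisymm hr'le hρr'
  rw [hr'eq] at hr'mem heig'
  exact ⟨hr'mem, x', hx'ne, hx'0, heig'⟩
end
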